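/- arXiv:2504.07700 — 11 statements merged into one kernel-verified Lean document; each statement's English description precedes it below -/
import Mathlib

section
/- Let M = (m_ij) be a symmetric real n×n matrix with zero diagonal and nonnegative off-diagonal entries. Then the matrix Φ_t(M) with entries t^{m_ij} is positive semidefinite for every t ∈ (0,1) if and only if M is conditionally negative semidefinite. -/
open Finset Matrix Filter Topology


private lemma dot_eq' {n : ℕ} (A : Matrix (Fin n) (Fin n) ℝ) (x : Fin n → ℝ) :
    dotProduct (star x) (A.mulVec x) = ∑ i, ∑ j, A i j * x i * x j := by
  simp only [dotProduct, Matrix.mulVec, star_trivial, Finset.mul_sum]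
  exact Finset.sum_congr rfl fun i _ => Finset.sum_congr rfl fun j _ => by ring

private lemma psd_quad' {n : ℕ} {A : Matrix (Fin n) (Fin n) ℝ} (hA : A.PosSemidef)
    (x : Fin n → ℝ) : 0 ≤ ∑ i, ∑ j, A i j * x i * x j := by
  have h := hA.dotProduct_mulVec_nonneg x; rwa [dot_eq'] at h

private lemma quad_psd' {n : ℕ} {A : Matrix (Fin n) (Fin n) ℝ} (hs : A.IsSymm)
    (h : ∀ x : Fin n → ℝ, 0 ≤ ∑ i, ∑ j, A i j * x i * x j) : A.PosSemidef := by
  refine Matrix.PosSemidef.of_dotProduct_mulVec_nonneg ?_ fun x => ?_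
  · ext i j
    simp only [Matrix.conjTranspose_apply, star_trivial]
    exact (congrFun (congrFun hs i) j : Aᵀ i j = A i j) ▸ rfl
  · rw [dot_eq']; exact h x

private lemma had_quad' {n : ℕ} {A B : Matrix (Fin n) (Fin n) ℝ} (hA : A.PosSemidef)
    (hB : ∀ x : Fin n → ℝ, 0 ≤ ∑ i, ∑ j, B i j * x i * x j) (x : Fin n → ℝ) :
    0 ≤ ∑ i, ∑ j, A i j * B i j * x i * x j := by
  open scoped MatrixOrder in obtain ⟨S, hS⟩ := CStarAlgebra.nonneg_iff_eq_star_mul_self.mp hA.nonneg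
  have hAij : ∀ i j, A i j = ∑ k, S k i * S k j := by
    intro i j
    rw [hS]
    simp [Matrix.mul_apply, Matrix.star_eq_conjTranspose, Matrix.conjTranspose_apply]
  have key : ∑ i, ∑ j, A i j * B i j * x i * x j
      = ∑ k, ∑ i, ∑ j, B i j * (S k i * x i) * (S k j * x j) := by
    have h1 : ∑ i, ∑ j, A i j * B i j * x i * x j
        = ∑ i, ∑ k, ∑ j, B i j * (S k i * x i) * (S k j * x j) := by
      refine Finset.sum_congr rfl fun i _ => ?_
      rw [Finset.sum_comm]
      refine Finset.sum_congr rfl fun j _ => ?_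
      rw [hAij, Finset.sum_mul, Finset.sum_mul, Finset.sum_mul]
      exact Finset.sum_congr rfl fun k _ => by ring
    rw [h1, Finset.sum_comm]
  rw [key]
  exact Finset.sum_nonneg fun k _ => hB fun i => S k i * x i

private lemma pow_quad' {n : ℕ} {A : Matrix (Fin n) (Fin n) ℝ} (hA : A.PosSemidef)
    (k : ℕ) (x : Fin n → ℝ) : 0 ≤ ∑ i, ∑ j, (A i j) ^ k * x i * x j := by
  induction k generalizing x with
  | zero =>
      simp only [pow_zero, one_mul]
      rw [← Finset.sum_mul_sum]
      exact mul_self_nonneg _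
  | succ m ih =>
      have := had_quad' hA (B := Matrix.of fun i j => (A i j) ^ m) (fun y => ih y) x
      simp only [Matrix.of_apply] at this
      calc (0:ℝ) ≤ ∑ i, ∑ j, A i j * (A i j) ^ m * x i * x j := this
        _ = ∑ i, ∑ j, (A i j) ^ (m+1) * x i * x j := by
            exact Finset.sum_congr rfl fun i _ => Finset.sum_congr rfl fun j _ => by ring

private lemma exp_quad' {n : ℕ} {A : Matrix (Fin n) (Fin n) ℝ} (hA : A.PosSemidef)
    (x : Fin n → ℝ) : 0 ≤ ∑ i, ∑ j, Real.exp (A i j) * x i * x j := by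
  have hsum : ∀ i j : Fin n, Summable (fun k : ℕ => (A i j) ^ k / (k.factorial : ℝ) * (x i * x j)) :=
    fun i j => (Real.summable_pow_div_factorial (A i j)).mul_right _
  have hexp : ∀ i j : Fin n, Real.exp (A i j) * x i * x j
      = ∑' k : ℕ, (A i j) ^ k / (k.factorial : ℝ) * (x i * x j) := by
    intro i j
    rw [Real.exp_eq_exp_ℝ, NormedSpace.exp_eq_tsum_div, tsum_mul_right, mul_assoc]
  calc (0:ℝ) ≤ ∑' k : ℕ, ∑ i, ∑ j, (A i j) ^ k / (k.factorial : ℝ) * (x i * x j) := by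
        refine tsum_nonneg fun k => ?_
        have h1 : ∑ i, ∑ j, (A i j) ^ k / (k.factorial : ℝ) * (x i * x j)
            = (∑ i, ∑ j, (A i j) ^ k * x i * x j) / (k.factorial : ℝ) := by
          rw [Finset.sum_div]
          refine Finset.sum_congr rfl fun i _ => ?_
          rw [Finset.sum_div]
          exact Finset.sum_congr rfl fun j _ => by ring
        rw [h1]
        exact div_nonneg (pow_quad' hA k x) (by positivity)
    _ = ∑ i, ∑ j, Real.exp (A i j) * x i * x j := by
        rw [Summable.tsum_finsetSum (fun i _ => summable_sum fun j _ => hsum i j)]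
        refine Finset.sum_congr rfl fun i _ => ?_
        rw [Summable.tsum_finsetSum (fun j _ => hsum i j)]
        exact Finset.sum_congr rfl fun j _ => (hexp i j).symm

/-- Schoenberg: Φ_t(M) = (t^{m_ij}) is positive semidefinite for every
t ∈ (0,1) iff M is conditionally negative semidefinite. -/
theorem schoenberg_posSemidef_iff_condNegSemidef {n : ℕ}
    (M : Matrix (Fin n) (Fin n) ℝ) (hsymm : M.IsSymm)
    (hdiag : ∀ i, M i i = 0) (hoff : ∀ i j, i ≠ j → 0 ≤ M i j) :
    (∀ t ∈ Set.Ioo (0 : ℝ) 1,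
        (Matrix.of fun i j => t ^ M i j : Matrix (Fin n) (Fin n) ℝ).PosSemidef) ↔
    (∀ c : Fin n → ℝ, (∑ i, c i) = 0 → ∑ i, ∑ j, M i j * c i * c j ≤ 0) := by
  constructor
  · intro h c hc
    set g : ℝ → ℝ := fun u => ∑ i, ∑ j, u ^ M i j * c i * c j with hg
    have hg1 : g 1 = 0 := by
      simp only [hg, Real.one_rpow, one_mul]
      rw [← Finset.sum_mul_sum, hc, zero_mul]
    have hderiv : HasDerivAt g (∑ i, ∑ j, M i j * c i * c j) 1 := by
      have key : ∀ i j : Fin n, HasDerivAt (fun u : ℝ => u ^ M i j * c i * c j)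
          (M i j * c i * c j) 1 := by
        intro i j
        have h0 : HasDerivAt (fun u : ℝ => u ^ M i j) (M i j * (1:ℝ) ^ (M i j - 1)) 1 :=
          Real.hasDerivAt_rpow_const (p := M i j) (Or.inl one_ne_zero)
        simpa [Real.one_rpow, mul_assoc] using h0.mul_const (c i * c j)
      exact HasDerivAt.fun_sum fun i _ => HasDerivAt.fun_sum fun j _ => key i j
    have hslope := hasDerivAt_iff_tendsto_slope.mp hderiv
    have hmono : 𝓝[<] (1:ℝ) ≤ 𝓝[≠] (1:ℝ) := nhdsWithin_mono _ fun u hu => ne_of_lt hu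
    have hten := hslope.mono_left hmono
    refine le_of_tendsto hten ?_
    filter_upwards [Ioo_mem_nhdsLT_of_mem (show (1:ℝ) ∈ Set.Ioc 0 1 from ⟨one_pos, le_refl _⟩)]
      with u hu
    have hgu : 0 ≤ g u := by
      have := psd_quad' (h u hu) c
      simpa [hg] using this
    show slope g 1 u ≤ 0
    rw [slope_def_field, hg1, sub_zero]
    exact div_nonpos_of_nonneg_of_nonpos hgu (by linarith [hu.2])
  · intro hcnd t ht
    have hMs : ∀ i j, M j i = M i j := fun i j => congrFun (congrFun hsymm i) j
    rcases Nat.eq_zero_or_pos n with hn | hn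
    · subst hn
      refine quad_psd' ?_ fun x => ?_
      · ext i j; exact i.elim0
      · simp
    · set i0 : Fin n := ⟨0, hn⟩ with hi0
      set L : ℝ := -Real.log t with hL
      have hLpos : 0 < L := by
        have := Real.log_neg ht.1 ht.2; simp only [hL]; linarith
      set B : Matrix (Fin n) (Fin n) ℝ :=
        Matrix.of fun i j => L * (M i i0 + M i0 j - M i j) with hB
      have hBsymm : B.IsSymm := by
        ext i j
        simp only [Matrix.transpose_apply, hB, Matrix.of_apply]
        rw [hMs i0 j, hMs i i0, hMs i j]
        ring
      have hBquad : ∀ x : Fin n → ℝ, 0 ≤ ∑ i, ∑ j, B i j * x i * x j := by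
        intro x
        set s : ℝ := ∑ k, x k with hs
        set c : Fin n → ℝ := fun i => x i - if i = i0 then s else 0 with hcdef
        have hcsum : ∑ i, c i = 0 := by
          simp only [hcdef, Finset.sum_sub_distrib, Finset.sum_ite_eq' Finset.univ i0,
            Finset.mem_univ, if_true, ← hs, sub_self]
        have h1 : ∀ g : Fin n → ℝ, ∑ j, g j * c j = (∑ j, g j * x j) - g i0 * s := by
          intro g
          simp only [hcdef, mul_sub, Finset.sum_sub_distrib, mul_ite, mul_zero]
          rw [Finset.sum_ite_eq' Finset.univ i0 (fun j => g j * s)]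
          simp
        have hM := hcnd c hcsum
        set T1 : ℝ := ∑ i, M i i0 * x i with hT1
        set T2 : ℝ := ∑ j, M i0 j * x j with hT2
        set QM : ℝ := ∑ i, (∑ j, M i j * x j) * x i with hQM
        have stepA : ∑ i, ∑ j, M i j * c i * c j = QM - T1 * s - T2 * s := by
          have stepA1 : ∀ i, ∑ j, M i j * c i * c j = ((∑ j, M i j * x j) - M i i0 * s) * c i := by
            intro i
            calc ∑ j, M i j * c i * c j = (∑ j, M i j * c j) * c i := by
                  rw [Finset.sum_mul]
                  exact Finset.sum_congr rfl fun j _ => by ring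
              _ = _ := by rw [h1 (fun j => M i j)]
          calc ∑ i, ∑ j, M i j * c i * c j
              = ∑ i, ((∑ j, M i j * x j) - M i i0 * s) * c i :=
                Finset.sum_congr rfl fun i _ => stepA1 i
            _ = (∑ i, ((∑ j, M i j * x j) - M i i0 * s) * x i)
                - ((∑ j, M i0 j * x j) - M i0 i0 * s) * s := h1 _
            _ = QM - T1 * s - T2 * s := by
                rw [hdiag i0]
                simp only [sub_mul, Finset.sum_sub_distrib]
                have e : ∑ i, M i i0 * s * x i = T1 * s := by
                  rw [hT1, Finset.sum_mul]
                  exact Finset.sum_congr rfl fun i _ => by ring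
                rw [e, ← hQM]
                ring
        have stepB : ∑ i, ∑ j, B i j * x i * x j = L * (T1 * s + T2 * s - QM) := by
          have inner : ∀ i, ∑ j, B i j * x i * x j
              = (L * M i i0 * x i) * s + ((L * x i) * (∑ j, M i0 j * x j)
                - (L * x i) * (∑ j, M i j * x j)) := by
            intro i
            calc ∑ j, B i j * x i * x j
                = ∑ j, ((L * M i i0 * x i) * x j
                  + ((L * x i) * (M i0 j * x j) - (L * x i) * (M i j * x j))) :=
                  Finset.sum_congr rfl fun j _ => by simp only [hB, Matrix.of_apply]; ring
              _ = _ := by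
                  rw [Finset.sum_add_distrib, Finset.sum_sub_distrib, ← Finset.mul_sum,
                    ← Finset.mul_sum, ← Finset.mul_sum, ← hs]
          calc ∑ i, ∑ j, B i j * x i * x j
              = ∑ i, ((L * M i i0 * x i) * s + ((L * x i) * T2 - (L * x i) * (∑ j, M i j * x j))) :=
                Finset.sum_congr rfl fun i _ => inner i
            _ = L * (T1 * s + T2 * s - QM) := by
                rw [Finset.sum_add_distrib, Finset.sum_sub_distrib]
                have e1 : ∑ i, L * M i i0 * x i * s = L * (T1 * s) := by
                  rw [hT1, Finset.sum_mul, Finset.mul_sum]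
                  exact Finset.sum_congr rfl fun i _ => by ring
                have e2 : ∑ i, L * x i * T2 = L * (T2 * s) := by
                  rw [hs, Finset.mul_sum, Finset.mul_sum]
                  exact Finset.sum_congr rfl fun i _ => by ring
                have e3 : ∑ i, L * x i * (∑ j, M i j * x j) = L * QM := by
                  rw [hQM, Finset.mul_sum]
                  exact Finset.sum_congr rfl fun i _ => by ring
                rw [e1, e2, e3]
                ring
        rw [stepB]
        rw [stepA] at hM
        have : 0 ≤ T1 * s + T2 * s - QM := by linarith
        exact mul_nonneg hLpos.le this
      have hBpsd := quad_psd' hBsymm hBquad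
      refine quad_psd' ?_ fun x => ?_
      · ext i j
        simp only [Matrix.transpose_apply, Matrix.of_apply]
        rw [hMs i j]
      · set y : Fin n → ℝ := fun i => Real.exp (Real.log t * M i i0) * x i with hy
        have key : ∀ i j : Fin n, (Matrix.of fun i j => t ^ M i j) i j * x i * x j
            = Real.exp (B i j) * y i * y j := by
          intro i j
          have e : Real.exp (B i j) * Real.exp (Real.log t * M i i0)
              * Real.exp (Real.log t * M j i0) = Real.exp (Real.log t * M i j) := by
            rw [← Real.exp_add, ← Real.exp_add]
            congr 1
            rw [hMs i0 j]
            simp only [hB, Matrix.of_apply, hL]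
            ring
          simp only [Matrix.of_apply, Real.rpow_def_of_pos ht.1, hy]
          calc Real.exp (Real.log t * M i j) * x i * x j
              = (Real.exp (B i j) * Real.exp (Real.log t * M i i0)
                * Real.exp (Real.log t * M j i0)) * x i * x j := by rw [e]
            _ = Real.exp (B i j) * (Real.exp (Real.log t * M i i0) * x i)
                * (Real.exp (Real.log t * M j i0) * x j) := by ring
        calc (0:ℝ) ≤ ∑ i, ∑ j, Real.exp (B i j) * y i * y j := exp_quad' hBpsd y
          _ = ∑ i, ∑ j, (Matrix.of fun i j => t ^ M i j) i j * x i * x j :=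
            Finset.sum_congr rfl fun i _ => Finset.sum_congr rfl fun j _ => (key i j).symm
end

section
/- Let M = (m_ij) be a symmetric real n×n matrix with zero diagonal and nonnegative off-diagonal entries. Then M is conditionally negative semidefinite if and only if there exist vectors x_1, …, x_n ∈ ℝ^n such that m_ij = ‖x_i − x_j‖₂² for all i,j. -/
open scoped MatrixOrder in
lemma exists_sqrt_aux {n : ℕ} {G : Matrix (Fin n) (Fin n) ℝ} (h : G.PosSemidef) :
    ∃ S : Matrix (Fin n) (Fin n) ℝ, S * S = G ∧ S.IsHermitian :=
  ⟨CFC.sqrt G, CFC.sqrt_mul_sqrt_self G h.nonneg, (Matrix.nonneg_iff_posSemidef.mp (CFC.sqrt_nonneg G)).1⟩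

/-- Schoenberg: M is conditionally negative semidefinite iff
m_ij = ‖x_i − x_j‖² for some vectors x_i ∈ ℝⁿ. -/
theorem condNegSemidef_iff_sq_euclidean {n : ℕ}
    (M : Matrix (Fin n) (Fin n) ℝ) (hsymm : M.IsSymm)
    (hdiag : ∀ i, M i i = 0) (hoff : ∀ i j, i ≠ j → 0 ≤ M i j) :
    (∀ c : Fin n → ℝ, (∑ i, c i) = 0 → ∑ i, ∑ j, M i j * c i * c j ≤ 0) ↔
    (∃ x : Fin n → EuclideanSpace ℝ (Fin n), ∀ i j, M i j = ‖x i - x j‖ ^ 2) := by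
  have hsym : ∀ i j, M j i = M i j := fun i j => congrFun (congrFun hsymm i) j
  constructor
  · intro h
    rcases Nat.eq_zero_or_pos n with hn | hn
    · subst hn
      exact ⟨Fin.elim0, fun i => i.elim0⟩
    · set b : Fin n := ⟨0, hn⟩ with hb
      set G : Matrix (Fin n) (Fin n) ℝ :=
        Matrix.of (fun i j => (M i b + M j b - M i j) / 2) with hG
      have hGsymm : G.IsHermitian := by
        ext i j
        simp [hG, hsym i j]
        ring
      have hGpsd : G.PosSemidef := by
        refine Matrix.PosSemidef.of_dotProduct_mulVec_nonneg hGsymm fun c => ?_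
        set s : ℝ := ∑ i, c i with hs
        set u : ℝ := ∑ i, M i b * c i with hu
        set d : Fin n → ℝ := fun i => c i - if i = b then s else 0 with hd
        have hdsum : ∑ i, d i = 0 := by
          simp [hd, Finset.sum_sub_distrib, Finset.sum_ite_eq', ← hs]
        have hMd := h d hdsum
        -- inner sum identity
        have inner_eq : ∀ i, ∑ j, M i j * d i * d j
            = d i * ((∑ j, M i j * c j) - s * M i b) := by
          intro i
          have e1 : ∀ j, M i j * d i * d j
              = d i * (M i j * c j) - d i * (if j = b then M i j * s else 0) := by
            intro j; by_cases hj : j = b <;> simp [hd, hj] <;> ring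
          rw [Finset.sum_congr rfl fun j _ => e1 j, Finset.sum_sub_distrib,
            ← Finset.mul_sum, ← Finset.mul_sum]
          simp [Finset.sum_ite_eq']
          ring
        have key : ∑ i, ∑ j, M i j * d i * d j
            = (∑ i, ∑ j, M i j * c i * c j) - 2 * s * u := by
          rw [Finset.sum_congr rfl fun i _ => inner_eq i]
          have e2 : ∀ i, d i * ((∑ j, M i j * c j) - s * M i b)
              = (c i * (∑ j, M i j * c j) - s * (M i b * c i))
                - (if i = b then (∑ j, M i j * c j) * s - s * s * M i b else 0) := by
            intro i; by_cases hi : i = b <;> simp [hd, hi] <;> ring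
          rw [Finset.sum_congr rfl fun i _ => e2 i, Finset.sum_sub_distrib,
            Finset.sum_sub_distrib]
          simp only [Finset.sum_ite_eq', Finset.mem_univ, if_true]
          have hMbb : M b b = 0 := hdiag b
          have hub : ∑ j, M b j * c j = u := by
            rw [hu]; exact Finset.sum_congr rfl fun j _ => by rw [hsym j b]
          rw [hMbb, hub, ← Finset.mul_sum, ← hu]
          have : ∀ i, c i * (∑ j, M i j * c j) = ∑ j, M i j * c i * c j := by
            intro i; rw [Finset.mul_sum]; exact Finset.sum_congr rfl fun j _ => by ring
          rw [Finset.sum_congr rfl fun i _ => this i]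
          ring
        -- now compute c ⬝ G c
        have hq : dotProduct c (G.mulVec c)
            = s * u - (∑ i, ∑ p, M i p * c i * c p) / 2 := by
          simp only [dotProduct, Matrix.mulVec, hG, Matrix.of_apply]
          have e3 : ∀ i, c i * (∑ j, (M i b + M j b - M i j) / 2 * c j)
              = (M i b * c i * s + c i * u - ∑ j, M i j * c i * c j) / 2 := by
            intro i
            have : ∑ j, (M i b + M j b - M i j) / 2 * c j
                = (M i b * s + u - ∑ j, M i j * c j) / 2 := by
              refine Eq.trans (Finset.sum_congr rfl fun j _ => by
                show _ = (M i b * c j + M j b * c j - M i j * c j) / 2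
                ring) ?_
              rw [← Finset.sum_div, Finset.sum_sub_distrib, Finset.sum_add_distrib,
                ← Finset.mul_sum, ← hs]
            rw [this]
            have : c i * ∑ j, M i j * c j = ∑ j, M i j * c i * c j := by
              rw [Finset.mul_sum]; exact Finset.sum_congr rfl fun j _ => by ring
            rw [← this]
            ring
          rw [Finset.sum_congr rfl fun i _ => e3 i]
          have : ∑ i, (M i b * c i * s + c i * u - ∑ j, M i j * c i * c j) / 2
              = ((∑ i, M i b * c i * s) + (∑ i, c i * u) - ∑ i, ∑ j, M i j * c i * c j) / 2 := by
            rw [← Finset.sum_div, Finset.sum_sub_distrib, Finset.sum_add_distrib]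
          rw [this, ← Finset.sum_mul, ← hu, ← Finset.sum_mul, ← hs]
          ring
        have hstar : star c = c := by funext i; simp
        rw [hstar, hq]
        have : (∑ i, ∑ p, M i p * c i * c p) ≤ 2 * s * u := by linarith [key ▸ hMd]
        linarith
      obtain ⟨S, hSS, hSsymm⟩ := exists_sqrt_aux hGpsd
      set x : Fin n → EuclideanSpace ℝ (Fin n) := fun i => WithLp.toLp 2 (fun k => S i k) with hx
      have hinner : ∀ i j, (inner ℝ (x i) (x j) : ℝ) = G i j := by
        intro i j
        have : (inner ℝ (x i) (x j) : ℝ) = ∑ k, S i k * S j k := by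
          simp [hx, PiLp.inner_apply, RCLike.inner_apply]
          exact Finset.sum_congr rfl fun k _ => mul_comm _ _
        rw [this]
        have : ∑ k, S i k * S j k = (S * S) i j := by
          simp [Matrix.mul_apply]
          exact Finset.sum_congr rfl fun k _ => by
            have := hSsymm.apply j k
            simp at this
            rw [← this]
        rw [this, hSS]
      refine ⟨x, fun i j => ?_⟩
      rw [norm_sub_sq_real, ← real_inner_self_eq_norm_sq, ← real_inner_self_eq_norm_sq,
        hinner, hinner, hinner]
      simp [hG, hdiag i, hdiag j, hsym i j]
      ring
  · rintro ⟨x, hx⟩ c hc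
    set y : EuclideanSpace ℝ (Fin n) := ∑ i, c i • x i with hy
    have hyy : (inner ℝ y y : ℝ) = ∑ i, ∑ j, c i * (c j * inner ℝ (x i) (x j)) := by
      rw [hy, sum_inner]
      refine Finset.sum_congr rfl fun i _ => ?_
      rw [real_inner_smul_left, inner_sum, Finset.mul_sum]
      exact Finset.sum_congr rfl fun j _ => by rw [real_inner_smul_right]
    have expand : ∀ i j, M i j * c i * c j
        = (‖x i‖^2 * c i) * c j + c i * (‖x j‖^2 * c j)
          - 2 * (c i * (c j * inner ℝ (x i) (x j))) := by
      intro i j; rw [hx i j, norm_sub_sq_real]; ring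
    have : ∑ i, ∑ j, M i j * c i * c j = -2 * (inner ℝ y y : ℝ) := by
      rw [Finset.sum_congr rfl fun i _ => Finset.sum_congr rfl fun j _ => expand i j]
      simp only [Finset.sum_add_distrib, Finset.sum_sub_distrib, ← Finset.mul_sum,
        ← Finset.sum_mul, hc, hyy]
      ring
    rw [this]
    have := real_inner_self_nonneg (x := y)
    linarith
end

section
/- Every metric on at most 4 points is Mossay–Tabuchi stable: if M = (m_ij) is a symmetric real 4×4 matrix with zero diagonal, strictly positive off-diagonal entries, and satisfying the triangle inequality m_ik ≤ m_ij + m_jk for all i,j,k, then for every t ∈ (0,1) the matrix Φ_t(M) with entries t^{m_ij} is positive semidefinite. -/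
/-- SOS step: quadratic form with entries given by products of cut parameters is nonneg. -/
lemma mt_sos (s1 s2 s3 s4 u v x1 x2 x3 x4 : ℝ)
    (hs1 : 0 ≤ s1) (hs1' : s1 ≤ 1) (hs2 : 0 ≤ s2) (hs2' : s2 ≤ 1)
    (hs3 : 0 ≤ s3) (hs3' : s3 ≤ 1) (hs4 : 0 ≤ s4) (hs4' : s4 ≤ 1)
    (hu : 0 ≤ u) (hu' : u ≤ 1) (hv : 0 ≤ v) (hv' : v ≤ 1) :
    0 ≤ x1 ^ 2 + x2 ^ 2 + x3 ^ 2 + x4 ^ 2 +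
      2 * (s1 * s2 * v * (x1 * x2) + s1 * s3 * u * (x1 * x3) +
           s1 * s4 * (u * v) * (x1 * x4) + s2 * s3 * (u * v) * (x2 * x3) +
           s2 * s4 * u * (x2 * x4) + s3 * s4 * v * (x3 * x4)) := by
  have h1u : (0:ℝ) ≤ 1 - u := by linarith
  have h1v : (0:ℝ) ≤ 1 - v := by linarith
  have c1 : (0:ℝ) ≤ 1 - s1 ^ 2 := by nlinarith
  have c2 : (0:ℝ) ≤ 1 - s2 ^ 2 := by nlinarith
  have c3 : (0:ℝ) ≤ 1 - s3 ^ 2 := by nlinarith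
  have c4 : (0:ℝ) ≤ 1 - s4 ^ 2 := by nlinarith
  nlinarith [mul_nonneg (mul_nonneg hu hv) (sq_nonneg (s1*x1 + s2*x2 + s3*x3 + s4*x4)),
    mul_nonneg (mul_nonneg h1u hv) (sq_nonneg (s1*x1 + s2*x2)),
    mul_nonneg (mul_nonneg h1u hv) (sq_nonneg (s3*x3 + s4*x4)),
    mul_nonneg (mul_nonneg hu h1v) (sq_nonneg (s1*x1 + s3*x3)),
    mul_nonneg (mul_nonneg hu h1v) (sq_nonneg (s2*x2 + s4*x4)),
    mul_nonneg (mul_nonneg h1u h1v) (sq_nonneg (s1*x1)),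
    mul_nonneg (mul_nonneg h1u h1v) (sq_nonneg (s2*x2)),
    mul_nonneg (mul_nonneg h1u h1v) (sq_nonneg (s3*x3)),
    mul_nonneg (mul_nonneg h1u h1v) (sq_nonneg (s4*x4)),
    mul_nonneg c1 (sq_nonneg x1), mul_nonneg c2 (sq_nonneg x2),
    mul_nonneg c3 (sq_nonneg x3), mul_nonneg c4 (sq_nonneg x4)]

/-- Master lemma: metric with the pair sum d14+d23 maximal gives nonneg quadratic form. -/
lemma mt_master (t d12 d13 d14 d23 d24 d34 x1 x2 x3 x4 : ℝ)
    (ht0 : 0 < t) (ht1 : t ≤ 1)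
    (h1 : d23 ≤ d12 + d13) (h2 : d14 ≤ d12 + d24)
    (h3 : d14 ≤ d13 + d34) (h4 : d23 ≤ d24 + d34)
    (hp : d12 + d34 ≤ d14 + d23) (hq : d13 + d24 ≤ d14 + d23) :
    0 ≤ x1 ^ 2 + x2 ^ 2 + x3 ^ 2 + x4 ^ 2 +
      2 * (t ^ d12 * (x1 * x2) + t ^ d13 * (x1 * x3) + t ^ d14 * (x1 * x4) +
           t ^ d23 * (x2 * x3) + t ^ d24 * (x2 * x4) + t ^ d34 * (x3 * x4)) := by
  have ht0' : (0:ℝ) ≤ t := le_of_lt ht0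
  set l1 : ℝ := (d12 + d13 - d23) / 2 with hl1
  set l2 : ℝ := (d12 + d24 - d14) / 2 with hl2
  set l3 : ℝ := (d13 + d34 - d14) / 2 with hl3
  set l4 : ℝ := (d24 + d34 - d23) / 2 with hl4
  set mu : ℝ := (d14 + d23 - d12 - d34) / 2 with hmu
  set nu : ℝ := (d14 + d23 - d13 - d24) / 2 with hnu
  have e12 : t ^ d12 = t ^ l1 * t ^ l2 * t ^ nu := by
    rw [← Real.rpow_add ht0, ← Real.rpow_add ht0]
    have : d12 = l1 + l2 + nu := by rw [hl1, hl2, hnu]; ring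
    rw [this]
  have e13 : t ^ d13 = t ^ l1 * t ^ l3 * t ^ mu := by
    rw [← Real.rpow_add ht0, ← Real.rpow_add ht0]
    have : d13 = l1 + l3 + mu := by rw [hl1, hl3, hmu]; ring
    rw [this]
  have e14 : t ^ d14 = t ^ l1 * t ^ l4 * (t ^ mu * t ^ nu) := by
    rw [← Real.rpow_add ht0, ← Real.rpow_add ht0, ← Real.rpow_add ht0]
    have : d14 = l1 + l4 + (mu + nu) := by rw [hl1, hl4, hmu, hnu]; ring
    rw [this]
  have e23 : t ^ d23 = t ^ l2 * t ^ l3 * (t ^ mu * t ^ nu) := by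
    rw [← Real.rpow_add ht0, ← Real.rpow_add ht0, ← Real.rpow_add ht0]
    have : d23 = l2 + l3 + (mu + nu) := by rw [hl2, hl3, hmu, hnu]; ring
    rw [this]
  have e24 : t ^ d24 = t ^ l2 * t ^ l4 * t ^ mu := by
    rw [← Real.rpow_add ht0, ← Real.rpow_add ht0]
    have : d24 = l2 + l4 + mu := by rw [hl2, hl4, hmu]; ring
    rw [this]
  have e34 : t ^ d34 = t ^ l3 * t ^ l4 * t ^ nu := by
    rw [← Real.rpow_add ht0, ← Real.rpow_add ht0]
    have : d34 = l3 + l4 + nu := by rw [hl3, hl4, hnu]; ring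
    rw [this]
  rw [e12, e13, e14, e23, e24, e34]
  exact mt_sos (t ^ l1) (t ^ l2) (t ^ l3) (t ^ l4) (t ^ mu) (t ^ nu) x1 x2 x3 x4
    (Real.rpow_pos_of_pos ht0 _).le (Real.rpow_le_one ht0' ht1 (by rw [hl1]; linarith))
    (Real.rpow_pos_of_pos ht0 _).le (Real.rpow_le_one ht0' ht1 (by rw [hl2]; linarith))
    (Real.rpow_pos_of_pos ht0 _).le (Real.rpow_le_one ht0' ht1 (by rw [hl3]; linarith))
    (Real.rpow_pos_of_pos ht0 _).le (Real.rpow_le_one ht0' ht1 (by rw [hl4]; linarith))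
    (Real.rpow_pos_of_pos ht0 _).le (Real.rpow_le_one ht0' ht1 (by rw [hmu]; linarith))
    (Real.rpow_pos_of_pos ht0 _).le (Real.rpow_le_one ht0' ht1 (by rw [hnu]; linarith))

/-- Every metric on 4 points is Mossay–Tabuchi stable: Φ_t(M) is
positive semidefinite for every t ∈ (0,1). -/
theorem metric_four_points_MT_stable
    (M : Matrix (Fin 4) (Fin 4) ℝ) (hsymm : M.IsSymm)
    (hdiag : ∀ i, M i i = 0) (hoff : ∀ i j, i ≠ j → 0 < M i j)
    (htri : ∀ i j k, M i k ≤ M i j + M j k) :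
    ∀ t ∈ Set.Ioo (0 : ℝ) 1,
      (Matrix.of fun i j => t ^ M i j : Matrix (Fin 4) (Fin 4) ℝ).PosSemidef := by
  intro t ht
  obtain ⟨ht0, ht1⟩ := ht
  have hs : ∀ i j : Fin 4, M j i = M i j := fun i j => hsymm.apply i j
  rw [Matrix.posSemidef_iff_dotProduct_mulVec]
  constructor
  · ext i j
    simp only [Matrix.conjTranspose_apply, Matrix.of_apply, star_trivial]
    rw [hs i j]
  · intro x
    simp only [dotProduct, Matrix.mulVec, Matrix.of_apply, Fin.sum_univ_four,
      Pi.star_apply, star_trivial]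
    rw [hs 0 1, hs 0 2, hs 0 3, hs 1 2, hs 1 3, hs 2 3,
      hdiag 0, hdiag 1, hdiag 2, hdiag 3, Real.rpow_zero]
    rcases le_total (M 0 1 + M 2 3) (M 0 3 + M 1 2) with hA | hA <;>
      rcases le_total (M 0 2 + M 1 3) (M 0 3 + M 1 2) with hB | hB <;>
      rcases le_total (M 0 1 + M 2 3) (M 0 2 + M 1 3) with hC | hC <;>
      first
      | -- M 0 3 + M 1 2 is max: points (0,1,2,3)
        (have key := mt_master t (M 0 1) (M 0 2) (M 0 3) (M 1 2) (M 1 3) (M 2 3)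
          (x 0) (x 1) (x 2) (x 3) ht0 ht1.le
          (by linarith [htri 1 0 2, hs 0 1]) (by linarith [htri 0 1 3])
          (by linarith [htri 0 2 3]) (by linarith [htri 1 3 2, hs 2 3])
          (by linarith) (by linarith)
         nlinarith [key])
      | -- M 0 2 + M 1 3 is max: points (0,1,3,2)
        (have key := mt_master t (M 0 1) (M 0 3) (M 0 2) (M 1 3) (M 1 2) (M 2 3)
          (x 0) (x 1) (x 3) (x 2) ht0 ht1.le
          (by linarith [htri 1 0 3, hs 0 1]) (by linarith [htri 0 1 2])
          (by linarith [htri 0 3 2, hs 2 3]) (by linarith [htri 1 2 3])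
          (by linarith) (by linarith)
         nlinarith [key])
      | -- M 0 1 + M 2 3 is max: points (0,2,3,1)
        (have key := mt_master t (M 0 2) (M 0 3) (M 0 1) (M 2 3) (M 1 2) (M 1 3)
          (x 0) (x 2) (x 3) (x 1) ht0 ht1.le
          (by linarith [htri 2 0 3, hs 0 2]) (by linarith [htri 0 2 1, hs 1 2])
          (by linarith [htri 0 3 1, hs 1 3]) (by linarith [htri 2 1 3, hs 1 2])
          (by linarith) (by linarith)
         nlinarith [key])
end

section
/- For integers n,m ≥ 1 and t ∈ (0,1), the matrix Φ^{K_{n,m}}_t − (1−t²)·I has rank exactly 2. -/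
/-- The freeness-of-trade matrix of the bipartite metric `K_{n,m}`: diagonal entries 1,
entries `t` across the bipartition (first `n` vs last `m` indices), entries `t²` within
each side. -/
def PhiK (n m : ℕ) (t : ℝ) : Matrix (Fin (n + m)) (Fin (n + m)) ℝ :=
  Matrix.of fun i j =>
    if i = j then 1 else if ((i : ℕ) < n ↔ (j : ℕ) < n) then t ^ 2 else t

/-- Φ^{K_{n,m}}_t − (1−t²)·I has rank exactly 2. -/
theorem rank_PhiK_sub_eq_two (n m : ℕ) (hn : 1 ≤ n) (hm : 1 ≤ m)
    (t : ℝ) (ht : t ∈ Set.Ioo (0 : ℝ) 1) :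
    (PhiK n m t - (1 - t ^ 2) • (1 : Matrix (Fin (n + m)) (Fin (n + m)) ℝ)).rank = 2 := by
  obtain ⟨ht0, ht1⟩ := ht
  set M : Matrix (Fin (n + m)) (Fin (n + m)) ℝ :=
    PhiK n m t - (1 - t ^ 2) • (1 : Matrix (Fin (n + m)) (Fin (n + m)) ℝ) with hM
  have hMentry : ∀ i j, M i j = if ((i : ℕ) < n ↔ (j : ℕ) < n) then t ^ 2 else t := by
    intro i j
    simp only [hM, Matrix.sub_apply, Matrix.smul_apply, Matrix.one_apply, PhiK,
      Matrix.of_apply, smul_eq_mul]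
    by_cases h : i = j
    · subst h; simp
    · simp [h]
  -- factorization
  set A : Matrix (Fin (n + m)) (Fin 2) ℝ :=
    Matrix.of fun i k => if (i : ℕ) < n then (if k = 0 then 1 else 0)
      else (if k = 0 then 0 else 1) with hA
  set B : Matrix (Fin 2) (Fin (n + m)) ℝ :=
    Matrix.of fun k j => if k = 0 then (if (j : ℕ) < n then t ^ 2 else t)
      else (if (j : ℕ) < n then t else t ^ 2) with hB
  have hfact : M = A * B := by
    ext i j
    rw [hMentry i j, Matrix.mul_apply, Fin.sum_univ_two]
    simp only [hA, hB, Matrix.of_apply]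
    by_cases hi : (i : ℕ) < n <;> by_cases hj : (j : ℕ) < n <;>
      simp [hi, hj]
  have hle : M.rank ≤ 2 := by
    rw [hfact]
    calc (A * B).rank ≤ B.rank := Matrix.rank_mul_le_right A B
      _ ≤ Fintype.card (Fin 2) := Matrix.rank_le_card_height B
      _ = 2 := by simp
  -- lower bound: two independent columns
  have hn' : (0 : ℕ) < n + m := by omega
  have hnm : n < n + m := by omega
  set i0 : Fin (n + m) := ⟨0, hn'⟩ with hi0
  set i1 : Fin (n + m) := ⟨n, hnm⟩ with hi1
  set c0 : Fin (n + m) → ℝ := M.mulVec (Pi.single i0 1) with hc0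
  set c1 : Fin (n + m) → ℝ := M.mulVec (Pi.single i1 1) with hc1
  have hc0val : ∀ i, c0 i = if (i : ℕ) < n then t ^ 2 else t := by
    intro i
    simp only [hc0, Matrix.mulVec_single_one, Matrix.col_apply]
    rw [hMentry]
    have : ((i0 : ℕ) < n) = True := by simp [hi0]; omega
    simp [this]
  have hc1val : ∀ i, c1 i = if (i : ℕ) < n then t else t ^ 2 := by
    intro i
    simp only [hc1, Matrix.mulVec_single_one, Matrix.col_apply]
    rw [hMentry]
    have : ((i1 : ℕ) < n) = False := by simp [hi1]
    simp only [this]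
    by_cases h : (i : ℕ) < n <;> simp [h]
  have hindep : LinearIndependent ℝ ![c0, c1] := by
    rw [LinearIndependent.pair_iff]
    intro s r hsr
    have h0 := congrFun hsr i0
    have h1 := congrFun hsr i1
    simp only [Pi.add_apply, Pi.smul_apply, smul_eq_mul, Pi.zero_apply,
      hc0val, hc1val] at h0 h1
    have e0 : ((i0 : ℕ) < n) := by simp [hi0]; omega
    have e1 : ¬ ((i1 : ℕ) < n) := by simp [hi1]
    rw [if_pos e0, if_pos e0] at h0
    rw [if_neg e1, if_neg e1] at h1
    have hsum : (s + r) * (t ^ 2 + t) = 0 := by linear_combination h0 + h1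
    have hdiff : (s - r) * (t ^ 2 - t) = 0 := by linear_combination h0 - h1
    have hne1 : t ^ 2 + t ≠ 0 := by nlinarith
    have hne2 : t ^ 2 - t ≠ 0 := by nlinarith
    have h2 : s + r = 0 := (mul_eq_zero.1 hsum).resolve_right hne1
    have h3 : s - r = 0 := (mul_eq_zero.1 hdiff).resolve_right hne2
    constructor <;> linarith
  have hge : 2 ≤ M.rank := by
    have hrange : ∀ v : Fin (n + m) → ℝ, M.mulVec v ∈ LinearMap.range M.mulVecLin :=
      fun v => ⟨v, rfl⟩
    have hspan : Submodule.span ℝ (Set.range ![c0, c1]) ≤ LinearMap.range M.mulVecLin := by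
      rw [Submodule.span_le]
      rintro x ⟨k, rfl⟩
      fin_cases k
      · exact hrange _
      · exact hrange _
    have hfin : Module.finrank ℝ (Submodule.span ℝ (Set.range ![c0, c1])) = 2 := by
      rw [finrank_span_eq_card hindep]; simp
    calc 2 = Module.finrank ℝ (Submodule.span ℝ (Set.range ![c0, c1])) := hfin.symm
      _ ≤ Module.finrank ℝ (LinearMap.range M.mulVecLin) := Submodule.finrank_mono hspan
      _ = M.rank := rfl
  omega
end

section
/- For integers n,m ≥ 1 with n+m ≥ 3 and t ∈ (0,1), the characteristic polynomial of Φ^{K_{n,m}}_t equals (x − (1−t²))^{n+m−2} · (x − λ₊) · (x − λ₋), where λ± = 1 + ((n+m−2)/2)·t² ± (1/2)·√(4nm t² + (n−m)² t⁴). In particular, 1 − t² is an eigenvalue of Φ^{K_{n,m}}_t of multiplicity n+m−2, and λ₊ and λ₋ are the two remaining eigenvalues. -/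
open Polynomial

open Matrix Finset in
lemma sum_ite_lt_left {R : Type*} [CommRing R] (n m : ℕ) (a : R) :
    (∑ j : Fin (n+m), if (j:ℕ) < n then a else 0) = n * a := by
  rw [Fin.sum_univ_eq_sum_range (fun j => if j < n then a else 0)]
  rw [Finset.sum_ite, Finset.sum_const_zero, add_zero, Finset.sum_const]
  have h : (Finset.range (n+m)).filter (fun j => j < n) = Finset.range n := by
    ext x; simp; omega
  rw [h, Finset.card_range, nsmul_eq_mul]

open Matrix Finset in
lemma sum_ite_lt_right {R : Type*} [CommRing R] (n m : ℕ) (a : R) :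
    (∑ j : Fin (n+m), if (j:ℕ) < n then 0 else a) = m * a := by
  rw [Fin.sum_univ_eq_sum_range (fun j => if j < n then 0 else a)]
  rw [Finset.sum_ite, Finset.sum_const_zero, zero_add, Finset.sum_const]
  have h : (Finset.range (n+m)).filter (fun j => ¬ j < n) = Finset.Ico n (n+m) := by
    ext x; simp [Finset.mem_Ico]; omega
  rw [h, Nat.card_Ico, Nat.add_sub_cancel_left, nsmul_eq_mul]

set_option maxHeartbeats 1000000 in
/-- the characteristic polynomial of Φ^{K_{n,m}}_t is
(x−(1−t²))^{n+m−2}·(x−λ₊)·(x−λ₋). -/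
theorem charpoly_PhiK (n m : ℕ) (hn : 1 ≤ n) (hm : 1 ≤ m) (hnm : 3 ≤ n + m)
    (t : ℝ) (ht : t ∈ Set.Ioo (0 : ℝ) 1) :
    (PhiK n m t).charpoly =
      (X - C (1 - t ^ 2)) ^ (n + m - 2) *
        (X - C (1 + (((n : ℝ) + m - 2) / 2) * t ^ 2
            + (1 / 2) * Real.sqrt (4 * n * m * t ^ 2 + ((n : ℝ) - m) ^ 2 * t ^ 4))) *
        (X - C (1 + (((n : ℝ) + m - 2) / 2) * t ^ 2
            - (1 / 2) * Real.sqrt (4 * n * m * t ^ 2 + ((n : ℝ) - m) ^ 2 * t ^ 4))) := by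
  obtain ⟨ht0, ht1⟩ := ht
  have hD0 : (0:ℝ) ≤ 4 * n * m * t ^ 2 + ((n : ℝ) - m) ^ 2 * t ^ 4 := by positivity
  set D : ℝ := 4 * n * m * t ^ 2 + ((n : ℝ) - m) ^ 2 * t ^ 4 with hDdef
  have hsq : Real.sqrt D ^ 2 = D := Real.sq_sqrt hD0
  set lp : ℝ := 1 + (((n : ℝ) + m - 2) / 2) * t ^ 2 + (1/2) * Real.sqrt D with hlp
  set lm : ℝ := 1 + (((n : ℝ) + m - 2) / 2) * t ^ 2 - (1/2) * Real.sqrt D with hlm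
  -- move to the fraction field of ℝ[X]
  set Kf := FractionRing (Polynomial ℝ) with hKf
  set φ : ℝ[X] →+* Kf := (algebraMap ℝ[X] Kf : ℝ[X] →+* Kf) with hφdef
  have hφ : Function.Injective φ := IsFractionRing.injective _ _
  apply hφ
  set ρ : ℝ →+* Kf := φ.comp (C : ℝ →+* ℝ[X]) with hρdef
  have hC : ∀ r : ℝ, φ (C r) = ρ r := fun r => rfl
  set ξ : Kf := φ X with hξ
  set μ : Kf := ξ - ρ (1 - t^2) with hμdef
  have hμ : μ ≠ 0 := by
    have h1 : μ = φ (X - C (1 - t^2)) := by rw [map_sub, hC]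
    rw [h1]
    intro h
    exact X_sub_C_ne_zero (1 - t^2) (hφ (by simpa using h))
  set U : Matrix (Fin (n+m)) (Fin 2) Kf := Matrix.of (fun i k =>
    if (i:ℕ) < n then (if k = 0 then 1 else 0) else (if k = 0 then 0 else 1)) with hU
  set V : Matrix (Fin 2) (Fin (n+m)) Kf := Matrix.of (fun k j =>
    if (j:ℕ) < n then (if k = 0 then ρ (t^2) else ρ t)
    else (if k = 0 then ρ t else ρ (t^2))) with hV
  have hρ1 : ρ ((1:ℝ) - t^2) = 1 - ρ (t^2) := by rw [map_sub, map_one]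
  have hmap : (Matrix.charmatrix (PhiK n m t)).map φ
      = μ • (1 : Matrix (Fin (n+m)) (Fin (n+m)) Kf) - U * V := by
    ext i j
    simp only [Matrix.map_apply, Matrix.sub_apply, Matrix.smul_apply, Matrix.mul_apply,
      Fin.sum_univ_two, Matrix.one_apply, hU, hV, Matrix.of_apply, smul_eq_mul]
    by_cases hij : i = j
    · subst hij
      rw [Matrix.charmatrix_apply_eq]
      by_cases hi : (i:ℕ) < n <;>
        simp [hi, PhiK, hμdef, map_sub, hC, hρ1, map_one] <;> ring
    · rw [Matrix.charmatrix_apply_ne _ _ _ hij, map_neg, hC]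
      by_cases hi : (i:ℕ) < n <;> by_cases hj : (j:ℕ) < n <;>
        simp [hij, hi, hj, PhiK]
  -- the 2x2 matrix
  set W : Matrix (Fin 2) (Fin 2) Kf :=
    !![(n:Kf) * ρ (t^2), (m:Kf) * ρ t; (n:Kf) * ρ t, (m:Kf) * ρ (t^2)] with hWdef
  have hVU : V * U = W := by
    ext k k'
    fin_cases k <;> fin_cases k' <;>
      simp only [Matrix.mul_apply, hU, hV, Matrix.of_apply, hWdef,
        Matrix.cons_val', Matrix.cons_val_zero, Matrix.cons_val_one, Matrix.head_cons,
        Matrix.empty_val', Matrix.cons_val_fin_one, Matrix.head_fin_const, Fin.isValue,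
        Fin.zero_eta, Fin.mk_one]
    · rw [← sum_ite_lt_left n m (ρ (t^2))]
      apply Finset.sum_congr rfl
      intro j _; split <;> simp
    · rw [← sum_ite_lt_right n m (ρ t)]
      apply Finset.sum_congr rfl
      intro j _; split <;> simp
    · rw [← sum_ite_lt_left n m (ρ t)]
      apply Finset.sum_congr rfl
      intro j _; split <;> simp
    · rw [← sum_ite_lt_right n m (ρ (t^2))]
      apply Finset.sum_congr rfl
      intro j _; split <;> simp
  -- compute the determinant
  have hdet : φ ((PhiK n m t).charpoly)
      = μ ^ (n+m) * ((1 - μ⁻¹ * ((n:Kf) * ρ (t^2))) * (1 - μ⁻¹ * ((m:Kf) * ρ (t^2)))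
          - (μ⁻¹ * ((m:Kf) * ρ t)) * (μ⁻¹ * ((n:Kf) * ρ t))) := by
    rw [show (PhiK n m t).charpoly = (Matrix.charmatrix (PhiK n m t)).det from rfl,
      RingHom.map_det, RingHom.mapMatrix_apply, hmap]
    have hfact : μ • (1 : Matrix (Fin (n+m)) (Fin (n+m)) Kf) - U * V
        = μ • ((1 : Matrix (Fin (n+m)) (Fin (n+m)) Kf) - U * (μ⁻¹ • V)) := by
      rw [smul_sub, Matrix.mul_smul, smul_inv_smul₀ hμ]
    rw [hfact, Matrix.det_smul, Fintype.card_fin, Matrix.det_one_sub_mul_comm,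
      Matrix.smul_mul, hVU]
    congr 1
    rw [Matrix.det_fin_two]
    simp only [Matrix.sub_apply, Matrix.smul_apply, Matrix.one_apply, hWdef,
      Matrix.cons_val', Matrix.cons_val_zero, Matrix.cons_val_one, Matrix.head_cons,
      Matrix.empty_val', Matrix.cons_val_fin_one, Matrix.head_fin_const, smul_eq_mul]
    norm_num
    ring
  rw [hdet]
  -- map the RHS
  simp only [map_mul, map_pow, map_sub, hC]
  have hμ2 : ξ - (ρ 1 - ρ t ^ 2) = μ := by rw [hμdef, map_sub, map_one, map_pow]
  rw [← hξ, hμ2]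
  -- split off μ^(n+m-2)
  have hpow : μ ^ (n + m) = μ ^ (n + m - 2) * μ ^ 2 := by
    rw [← pow_add]; congr 1; omega
  -- key 2x2 identity
  have hfs : μ ^ 2 * ((1 - μ⁻¹ * ((n:Kf) * ρ t ^ 2)) * (1 - μ⁻¹ * ((m:Kf) * ρ t ^ 2))
          - (μ⁻¹ * ((m:Kf) * ρ t)) * (μ⁻¹ * ((n:Kf) * ρ t)))
      = (μ - (n:Kf) * ρ t ^ 2) * (μ - (m:Kf) * ρ t ^ 2) - ((m:Kf) * ρ t) * ((n:Kf) * ρ t) := by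
    have hinv : μ * μ⁻¹ = 1 := mul_inv_cancel₀ hμ
    linear_combination (-(((n:Kf) * ρ t ^ 2) + ((m:Kf) * ρ t ^ 2)) * μ
      + (((n:Kf) * ρ t ^ 2) * ((m:Kf) * ρ t ^ 2) - ((m:Kf) * ρ t) * ((n:Kf) * ρ t))
        * (μ * μ⁻¹ + 1)) * hinv
  rw [hpow, mul_assoc, hfs, mul_assoc (μ ^ (n + m - 2)) (ξ - ρ lp) (ξ - ρ lm)]
  congr 1
  have hnK : (n : Kf) = ρ (n : ℝ) := (map_natCast ρ n).symm
  have hmK : (m : Kf) = ρ (m : ℝ) := (map_natCast ρ m).symm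
  have Hs : ((ρ 1 - ρ t ^ 2) + ρ (n:ℝ) * ρ t ^ 2) + ((ρ 1 - ρ t ^ 2) + ρ (m:ℝ) * ρ t ^ 2)
      = ρ lp + ρ lm := by
    have hr : ((1 - t^2) + (n:ℝ) * t^2) + ((1 - t^2) + (m:ℝ) * t^2) = lp + lm := by
      rw [hlp, hlm]; ring
    have := congrArg ρ hr
    simpa only [map_add, map_mul, map_sub, map_pow] using this
  have Hp : ((ρ 1 - ρ t ^ 2) + ρ (n:ℝ) * ρ t ^ 2) * ((ρ 1 - ρ t ^ 2) + ρ (m:ℝ) * ρ t ^ 2)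
        - (ρ (m:ℝ) * ρ t) * (ρ (n:ℝ) * ρ t) = ρ lp * ρ lm := by
    have hr : ((1 - t^2) + (n:ℝ) * t^2) * ((1 - t^2) + (m:ℝ) * t^2)
        - ((m:ℝ) * t) * ((n:ℝ) * t) = lp * lm := by
      rw [hlp, hlm]
      linear_combination (1/4 : ℝ) * hsq
    have := congrArg ρ hr
    simpa only [map_add, map_mul, map_sub, map_pow] using this
  rw [← hμ2, hnK, hmK]
  linear_combination Hp - ξ * Hs
end

section
/- Let n,m ≥ 2 be integers with (n−1)(m−1) ≥ 1 and let t = 1/√((n−1)(m−1)), assumed to lie in (0,1]. Then 1 + ((n+m−2)/2)·t² − (1/2)·√(4nm t² + (n−m)² t⁴) = 0; equivalently, the matrix Φ^{K_{n,m}}_t is singular (0 is one of its eigenvalues). -/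
/-- at t = 1/√((n−1)(m−1)) the eigenvalue λ₋ vanishes and Φ^{K_{n,m}}_t
is singular. -/
theorem PhiK_singular_at_index (n m : ℕ) (hn : 2 ≤ n) (hm : 2 ≤ m)
    (h1 : 1 ≤ ((n : ℝ) - 1) * ((m : ℝ) - 1))
    (t : ℝ) (ht : t = 1 / Real.sqrt (((n : ℝ) - 1) * ((m : ℝ) - 1)))
    (ht1 : t ∈ Set.Ioc (0 : ℝ) 1) :
    1 + (((n : ℝ) + m - 2) / 2) * t ^ 2
        - (1 / 2) * Real.sqrt (4 * n * m * t ^ 2 + ((n : ℝ) - m) ^ 2 * t ^ 4) = 0 ∧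
    (PhiK n m t).det = 0 := by
  have hD : (0:ℝ) < ((n:ℝ)-1)*((m:ℝ)-1) := lt_of_lt_of_le one_pos h1
  have hDne : ((n:ℝ)-1)*((m:ℝ)-1) ≠ 0 := ne_of_gt hD
  have hnr : (2:ℝ) ≤ (n:ℝ) := by exact_mod_cast hn
  have hmr : (2:ℝ) ≤ (m:ℝ) := by exact_mod_cast hm
  have ht2 : t^2 = 1 / (((n:ℝ)-1)*((m:ℝ)-1)) := by
    rw [ht, div_pow, one_pow, Real.sq_sqrt hD.le]
  have key : (1+((n:ℝ)-1)*t^2) * (1+((m:ℝ)-1)*t^2) = (n:ℝ)*m*t^2 := by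
    have hn1 : (n:ℝ)-1 ≠ 0 := by linarith
    have hm1 : (m:ℝ)-1 ≠ 0 := by linarith
    rw [ht2]; field_simp [hn1, hm1]; ring
  have htpos : 0 < t := ht1.1
  constructor
  · have harg : 4*(n:ℝ)*m*t^2 + ((n:ℝ)-m)^2*t^4 = (2 + ((n:ℝ)+m-2)*t^2)^2 := by
      have h4 : t^4 = (t^2)^2 := by ring
      have hn1 : (n:ℝ)-1 ≠ 0 := by linarith
      have hm1 : (m:ℝ)-1 ≠ 0 := by linarith
      rw [h4, ht2]; field_simp [hn1, hm1]; ring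
    have hnn : (0:ℝ) ≤ 2 + ((n:ℝ)+m-2)*t^2 := by nlinarith [sq_nonneg t]
    rw [harg, Real.sqrt_sq hnn]; ring
  · rw [← Matrix.exists_mulVec_eq_zero_iff]
    refine ⟨fun j => if (j:ℕ) < n then (m:ℝ)*t else -(1+((n:ℝ)-1)*t^2), ?_, ?_⟩
    · intro h
      have h0 : (0:ℕ) < n + m := by omega
      have := congrFun h ⟨0, h0⟩
      simp only [Pi.zero_apply] at this
      rw [if_pos (by simpa using lt_of_lt_of_le two_pos hn)] at this
      have hm0 : (0:ℝ) < (m:ℝ) := by linarith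
      nlinarith
    · funext i
      simp only [Matrix.mulVec, dotProduct, PhiK, Matrix.of_apply, Pi.zero_apply]
      have hsum : ∀ (c : ℝ) (f : Fin (n+m) → ℝ),
          ∑ j, (f j + if i = j then c else 0) = (∑ j, f j) + c := by
        intro c f
        rw [Finset.sum_add_distrib, Finset.sum_ite_eq]
        simp
      have hbase : ∀ x y : ℝ,
          ∑ j : Fin (n+m), (if (j:ℕ) < n then x else y) = n*x + m*y := by
        intro x y
        rw [Fin.sum_univ_add]
        simp [Nat.not_lt.2 (Nat.le_add_right n _)]
      rcases lt_or_ge (i:ℕ) n with hi | hi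
      · have hpt : ∀ j : Fin (n+m),
            (if i = j then (1:ℝ) else if ((i:ℕ) < n ↔ (j:ℕ) < n) then t^2 else t) *
              (if (j:ℕ) < n then (m:ℝ)*t else -(1+((n:ℝ)-1)*t^2))
            = (if (j:ℕ) < n then t^2*((m:ℝ)*t) else t*(-(1+((n:ℝ)-1)*t^2)))
              + (if i = j then (1-t^2)*((m:ℝ)*t) else 0) := by
          intro j
          rcases eq_or_ne i j with rfl | hij
          · simp [hi]; ring
          · rcases lt_or_ge (j:ℕ) n with hj | hj
            · simp [hij, hj, hi]
            · simp [hij, Nat.not_lt.2 hj, hi]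
        rw [Finset.sum_congr rfl (fun j _ => hpt j), hsum, hbase]
        ring
      · have hpt : ∀ j : Fin (n+m),
            (if i = j then (1:ℝ) else if ((i:ℕ) < n ↔ (j:ℕ) < n) then t^2 else t) *
              (if (j:ℕ) < n then (m:ℝ)*t else -(1+((n:ℝ)-1)*t^2))
            = (if (j:ℕ) < n then t*((m:ℝ)*t) else t^2*(-(1+((n:ℝ)-1)*t^2)))
              + (if i = j then (1-t^2)*(-(1+((n:ℝ)-1)*t^2)) else 0) := by
          intro j
          rcases eq_or_ne i j with rfl | hij
          · simp [Nat.not_lt.2 hi]; ring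
          · rcases lt_or_ge (j:ℕ) n with hj | hj
            · simp [hij, hj, Nat.not_lt.2 hi]
            · simp [hij, Nat.not_lt.2 hj, Nat.not_lt.2 hi]
        rw [Finset.sum_congr rfl (fun j _ => hpt j), hsum, hbase]
        linear_combination -key
end

section
/- Let n,m ≥ 2 be integers and t ∈ (0,1). Then Φ^{K_{n,m}}_t is positive semidefinite if and only if (n−1)(m−1)·t² ≤ 1. Consequently, the Mossay–Tabuchi stability index of K_{n,m} equals 1/√((n−1)(m−1)): Φ^{K_{n,m}}_t is positive semidefinite for all t ∈ (0,1) with t ≤ 1/√((n−1)(m−1)) and fails to be positive semidefinite for all t ∈ (0,1) with t > 1/√((n−1)(m−1)). -/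
open Matrix Finset in
lemma cardA (n m : ℕ) : (Finset.univ.filter fun i : Fin (n+m) => (i:ℕ) < n).card = n := by
  have : (Finset.univ.filter fun i : Fin (n+m) => (i:ℕ) < n)
      = Finset.map (Fin.castAddEmb m) Finset.univ := by
    ext i
    simp only [mem_filter, mem_univ, true_and, Finset.mem_map, Fin.castAddEmb]
    constructor
    · intro h
      exact ⟨⟨i, h⟩, by simp [Fin.castLEEmb, Fin.castAdd, Fin.castLE, Fin.ext_iff]⟩
    · rintro ⟨j, -, rfl⟩; simpa using j.isLt
  simp [this]

open Matrix Finset in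
lemma cardB (n m : ℕ) : (Finset.univ.filter fun i : Fin (n+m) => ¬ (i:ℕ) < n).card = m := by
  have h := Finset.card_filter_add_card_filter_not (s := (Finset.univ : Finset (Fin (n+m))))
    (p := fun i : Fin (n+m) => (i:ℕ) < n)
  rw [cardA] at h
  rw [Finset.card_univ, Fintype.card_fin] at h
  omega

open Matrix Finset in
lemma quadform (n m : ℕ) (t : ℝ) (x : Fin (n+m) → ℝ) :
    x ⬝ᵥ (PhiK n m t *ᵥ x) =
      (1 - t^2) * (∑ i, x i ^ 2)
      + t^2 * ((∑ i ∈ univ.filter (fun i : Fin (n+m) => (i:ℕ) < n), x i)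
             + (∑ i ∈ univ.filter (fun i : Fin (n+m) => ¬ (i:ℕ) < n), x i))^2
      + 2*(t - t^2) * (∑ i ∈ univ.filter (fun i : Fin (n+m) => (i:ℕ) < n), x i)
                    * (∑ i ∈ univ.filter (fun i : Fin (n+m) => ¬ (i:ℕ) < n), x i) := by
  classical
  have hM : ∀ i j : Fin (n+m), PhiK n m t i j =
      t^2 + (if i = j then 1 - t^2 else 0)
          + (if ((i:ℕ) < n ↔ (j:ℕ) < n) then 0 else t - t^2) := by
    intro i j
    simp only [PhiK, Matrix.of_apply]
    by_cases h : i = j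
    · subst h; simp
    · simp only [h, if_false]; split_ifs <;> ring
  have expand : x ⬝ᵥ (PhiK n m t *ᵥ x) = ∑ i, ∑ j, x i * (PhiK n m t i j * x j) := by
    simp [dotProduct, Matrix.mulVec, Finset.mul_sum]
  rw [expand]
  have hsplit : ∀ i j : Fin (n+m), x i * (PhiK n m t i j * x j) =
      x i * (t^2 * x j) + x i * ((if i = j then 1 - t^2 else 0) * x j)
        + x i * ((if ((i:ℕ) < n ↔ (j:ℕ) < n) then (0:ℝ) else t - t^2) * x j) := by
    intro i j; rw [hM]; ring
  simp only [hsplit, Finset.sum_add_distrib]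
  have t1 : ∑ i : Fin (n+m), ∑ j : Fin (n+m), x i * (t^2 * x j)
      = t^2 * (∑ i, x i) * (∑ i, x i) := by
    simp only [← Finset.mul_sum]
    rw [← Finset.sum_mul]; ring
  have t2 : ∑ i : Fin (n+m), ∑ j : Fin (n+m), x i * ((if i = j then 1 - t^2 else 0) * x j)
      = (1 - t^2) * ∑ i, x i ^ 2 := by
    have h2 : ∀ i : Fin (n+m), ∑ j : Fin (n+m), x i * ((if i = j then 1 - t^2 else 0) * x j)
        = (1 - t^2) * x i ^ 2 := by
      intro i
      simp [mul_ite, ite_mul, mul_zero, zero_mul, Finset.sum_ite_eq]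
      ring
    simp only [h2, ← Finset.mul_sum]
  have t3 : ∑ i : Fin (n+m), ∑ j : Fin (n+m),
        x i * ((if ((i:ℕ) < n ↔ (j:ℕ) < n) then (0:ℝ) else t - t^2) * x j)
      = (t - t^2) * ((∑ i ∈ univ.filter (fun i : Fin (n+m) => (i:ℕ) < n), x i)
          * (∑ i ∈ univ.filter (fun i : Fin (n+m) => ¬ (i:ℕ) < n), x i)
        + (∑ i ∈ univ.filter (fun i : Fin (n+m) => ¬ (i:ℕ) < n), x i)
          * (∑ i ∈ univ.filter (fun i : Fin (n+m) => (i:ℕ) < n), x i)) := by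
    have inner : ∀ i : Fin (n+m),
        ∑ j : Fin (n+m), x i * ((if ((i:ℕ) < n ↔ (j:ℕ) < n) then (0:ℝ) else t - t^2) * x j)
        = x i * ((t - t^2) * (if (i:ℕ) < n
            then (∑ j ∈ univ.filter (fun j : Fin (n+m) => ¬ (j:ℕ) < n), x j)
            else (∑ j ∈ univ.filter (fun j : Fin (n+m) => (j:ℕ) < n), x j))) := by
      intro i
      by_cases hi : (i:ℕ) < n
      · simp only [hi, true_iff, if_pos, ← Finset.mul_sum]
        congr 1
        simp only [ite_mul, zero_mul]
        rw [Finset.sum_ite]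
        simp [Finset.mul_sum]
      · simp only [hi, false_iff, if_neg, ← Finset.mul_sum]
        congr 1
        simp only [ite_mul, zero_mul]
        rw [Finset.sum_ite]
        simp [Finset.mul_sum, not_not]
    simp only [inner]
    rw [← Finset.sum_filter_add_sum_filter_not Finset.univ (fun i : Fin (n+m) => (i:ℕ) < n)]
    have e1 : ∑ i ∈ univ.filter (fun i : Fin (n+m) => (i:ℕ) < n),
        x i * ((t - t^2) * (if (i:ℕ) < n
          then (∑ j ∈ univ.filter (fun j : Fin (n+m) => ¬ (j:ℕ) < n), x j)
          else (∑ j ∈ univ.filter (fun j : Fin (n+m) => (j:ℕ) < n), x j)))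
        = (∑ i ∈ univ.filter (fun i : Fin (n+m) => (i:ℕ) < n), x i)
          * ((t - t^2) * (∑ j ∈ univ.filter (fun j : Fin (n+m) => ¬ (j:ℕ) < n), x j)) := by
      rw [Finset.sum_congr rfl (fun i hi => by
        rw [if_pos (Finset.mem_filter.mp hi).2]), ← Finset.sum_mul]
    have e2 : ∑ i ∈ univ.filter (fun i : Fin (n+m) => ¬ (i:ℕ) < n),
        x i * ((t - t^2) * (if (i:ℕ) < n
          then (∑ j ∈ univ.filter (fun j : Fin (n+m) => ¬ (j:ℕ) < n), x j)
          else (∑ j ∈ univ.filter (fun j : Fin (n+m) => (j:ℕ) < n), x j)))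
        = (∑ i ∈ univ.filter (fun i : Fin (n+m) => ¬ (i:ℕ) < n), x i)
          * ((t - t^2) * (∑ j ∈ univ.filter (fun j : Fin (n+m) => (j:ℕ) < n), x j)) := by
      rw [Finset.sum_congr rfl (fun i hi => by
        rw [if_neg (Finset.mem_filter.mp hi).2]), ← Finset.sum_mul]
    rw [e1, e2]
    ring
  rw [t1, t2, t3]
  rw [← Finset.sum_filter_add_sum_filter_not Finset.univ (fun i : Fin (n+m) => (i:ℕ) < n) x]
  ring

lemma key_pos (N M t PA PB a b : ℝ) (hN : 2 ≤ N) (hM : 2 ≤ M) (ht0 : 0 < t) (ht1 : t < 1)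
    (hK : (N-1)*(M-1)*t^2 ≤ 1) (ha : a^2 ≤ N * PA) (hb : b^2 ≤ M * PB) :
    0 ≤ (1-t^2) * (PA+PB) + t^2*(a+b)^2 + 2*(t-t^2)*a*b := by
  have hNpos : (0:ℝ) < N := by linarith
  have hMpos : (0:ℝ) < M := by linarith
  have h1 : (0:ℝ) ≤ 1 - t^2 := by nlinarith
  have hA' : (0:ℝ) < M*(1+(N-1)*t^2) := by
    have h5 : (0:ℝ) < 1+(N-1)*t^2 := by nlinarith
    positivity
  have key : (0:ℝ) ≤ (M*(1+(N-1)*t^2)*a + N*M*t*b)^2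
      + (N*M*(1-t^2)*(1-(N-1)*(M-1)*t^2))*b^2 := by
    have h2 : (0:ℝ) ≤ N*M*(1-t^2)*(1-(N-1)*(M-1)*t^2) := by
      have : (0:ℝ) ≤ 1-(N-1)*(M-1)*t^2 := by linarith
      positivity
    nlinarith [sq_nonneg (M*(1+(N-1)*t^2)*a + N*M*t*b), mul_nonneg h2 (sq_nonneg b)]
  have main : (0:ℝ) ≤ M*(1+(N-1)*t^2)*a^2 + N*(1+(M-1)*t^2)*b^2 + 2*(N*M*t)*a*b := by
    nlinarith [key, hA']
  have h3 : M*(1-t^2)*a^2 ≤ M*(1-t^2)*(N*PA) := by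
    apply mul_le_mul_of_nonneg_left ha (by positivity)
  have h4 : N*(1-t^2)*b^2 ≤ N*(1-t^2)*(M*PB) := by
    apply mul_le_mul_of_nonneg_left hb (by positivity)
  nlinarith [main, h3, h4, mul_pos hNpos hMpos]

lemma key_neg (N M t α β : ℝ) (hN : 2 ≤ N) (hM : 2 ≤ M) (ht0 : 0 < t) (ht1 : t < 1)
    (hK : 1 < (N-1)*(M-1)*t^2) (hα : α = M*(1+(M-1)*t^2)) (hβ : β = -(t*N*M)) :
    (1-t^2) * (N*α^2 + M*β^2)
      + t^2*(N*α + M*β)^2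
      + 2*(t-t^2)*(N*α)*(M*β) < 0 := by
  subst hα hβ
  have hNpos : (0:ℝ) < N := by linarith
  have hMpos : (0:ℝ) < M := by linarith
  have hid : (1-t^2) * (N*(M*(1+(M-1)*t^2))^2 + M*(-(t*N*M))^2)
      + t^2*(N*(M*(1+(M-1)*t^2)) + M*(-(t*N*M)))^2
      + 2*(t-t^2)*(N*(M*(1+(M-1)*t^2)))*(M*(-(t*N*M)))
      = (M*(1+(M-1)*t^2)) * (N*M*(1-t^2)) * (1-(N-1)*(M-1)*t^2) := by ring
  rw [hid]
  apply mul_neg_of_pos_of_neg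
  · have : (0:ℝ) < 1 - t^2 := by nlinarith
    have : (0:ℝ) < 1+(M-1)*t^2 := by nlinarith
    positivity
  · linarith

lemma PhiK_isHermitian (n m : ℕ) (t : ℝ) : (PhiK n m t).IsHermitian := by
  refine Matrix.IsHermitian.ext fun i j => ?_
  simp only [PhiK, Matrix.of_apply, RCLike.star_def, starRingEnd_apply, star_trivial]
  by_cases h : i = j
  · simp [h]
  · rw [if_neg h, if_neg (fun hh => h hh.symm), if_congr Iff.comm rfl rfl]


/-- for n,m ≥ 2 and t ∈ (0,1), Φ^{K_{n,m}}_t is positive semidefinite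
iff (n−1)(m−1)t² ≤ 1; hence the Mossay–Tabuchi stability index is 1/√((n−1)(m−1)). -/
theorem PhiK_posSemidef_iff (n m : ℕ) (hn : 2 ≤ n) (hm : 2 ≤ m) :
    (∀ t ∈ Set.Ioo (0 : ℝ) 1,
        ((PhiK n m t).PosSemidef ↔ ((n : ℝ) - 1) * ((m : ℝ) - 1) * t ^ 2 ≤ 1)) ∧
    (∀ t ∈ Set.Ioo (0 : ℝ) 1, t ≤ 1 / Real.sqrt (((n : ℝ) - 1) * ((m : ℝ) - 1)) →
        (PhiK n m t).PosSemidef) ∧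
    (∀ t ∈ Set.Ioo (0 : ℝ) 1, 1 / Real.sqrt (((n : ℝ) - 1) * ((m : ℝ) - 1)) < t →
        ¬ (PhiK n m t).PosSemidef) := by
  have hN : (2:ℝ) ≤ (n:ℝ) := by exact_mod_cast hn
  have hM : (2:ℝ) ≤ (m:ℝ) := by exact_mod_cast hm
  have main : ∀ t ∈ Set.Ioo (0:ℝ) 1,
      ((PhiK n m t).PosSemidef ↔ ((n:ℝ)-1)*((m:ℝ)-1)*t^2 ≤ 1) := by
    rintro t ⟨ht0, ht1⟩
    constructor
    · intro hpsd
      by_contra hlt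
      push_neg at hlt
      set α := (m:ℝ)*(1+((m:ℝ)-1)*t^2) with hα
      set β := -(t*(n:ℝ)*(m:ℝ)) with hβ
      set x : Fin (n+m) → ℝ := fun i => if (i:ℕ) < n then α else β with hx
      have hxA : ∀ i : Fin (n+m), (i:ℕ) < n → x i = α := by
        intro i hi; simp only [hx]; exact if_pos hi
      have hxB : ∀ i : Fin (n+m), ¬ (i:ℕ) < n → x i = β := by
        intro i hi; simp only [hx]; exact if_neg hi
      have h := hpsd.dotProduct_mulVec_nonneg x
      have hstar : star x = x := by ext i; simp
      rw [hstar, quadform] at h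
      have hSA : ∑ i ∈ Finset.univ.filter (fun i : Fin (n+m) => (i:ℕ) < n), x i = (n:ℝ) * α := by
        rw [Finset.sum_congr rfl (fun i hi => hxA i (Finset.mem_filter.mp hi).2),
          Finset.sum_const, cardA, nsmul_eq_mul]
      have hSB : ∑ i ∈ Finset.univ.filter (fun i : Fin (n+m) => ¬ (i:ℕ) < n), x i = (m:ℝ) * β := by
        rw [Finset.sum_congr rfl (fun i hi => hxB i (Finset.mem_filter.mp hi).2),
          Finset.sum_const, cardB, nsmul_eq_mul]
      have hP1 : ∑ i ∈ Finset.univ.filter (fun i : Fin (n+m) => (i:ℕ) < n), x i ^ 2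
          = (n:ℝ) * α^2 := by
        rw [Finset.sum_congr rfl (fun i hi => by
            rw [hxA i (Finset.mem_filter.mp hi).2]),
          Finset.sum_const, cardA, nsmul_eq_mul]
      have hP2 : ∑ i ∈ Finset.univ.filter (fun i : Fin (n+m) => ¬ (i:ℕ) < n), x i ^ 2
          = (m:ℝ) * β^2 := by
        rw [Finset.sum_congr rfl (fun i hi => by
            rw [hxB i (Finset.mem_filter.mp hi).2]),
          Finset.sum_const, cardB, nsmul_eq_mul]
      have hP : ∑ i, x i ^ 2 = (n:ℝ) * α^2 + (m:ℝ) * β^2 := by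
        rw [← Finset.sum_filter_add_sum_filter_not Finset.univ
          (fun i : Fin (n+m) => (i:ℕ) < n) (fun i => x i ^ 2), hP1, hP2]
      rw [hSA, hSB, hP] at h
      have hneg := key_neg (n:ℝ) (m:ℝ) t α β hN hM ht0 ht1 hlt hα hβ
      linarith
    · intro hle
      refine Matrix.PosSemidef.of_dotProduct_mulVec_nonneg (PhiK_isHermitian n m t) fun x => ?_
      have hstar : star x = x := by ext i; simp
      rw [hstar, quadform]
      rw [← Finset.sum_filter_add_sum_filter_not Finset.univ
        (fun i : Fin (n+m) => (i:ℕ) < n) (fun i => x i ^ 2)]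
      have hCA : (∑ i ∈ Finset.univ.filter (fun i : Fin (n+m) => (i:ℕ) < n), x i)^2
          ≤ (n:ℝ) * ∑ i ∈ Finset.univ.filter (fun i : Fin (n+m) => (i:ℕ) < n), x i ^ 2 := by
        have := sq_sum_le_card_mul_sum_sq
          (s := Finset.univ.filter (fun i : Fin (n+m) => (i:ℕ) < n)) (f := x)
        rwa [cardA] at this
      have hCB : (∑ i ∈ Finset.univ.filter (fun i : Fin (n+m) => ¬ (i:ℕ) < n), x i)^2
          ≤ (m:ℝ) * ∑ i ∈ Finset.univ.filter (fun i : Fin (n+m) => ¬ (i:ℕ) < n), x i ^ 2 := by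
        have := sq_sum_le_card_mul_sum_sq
          (s := Finset.univ.filter (fun i : Fin (n+m) => ¬ (i:ℕ) < n)) (f := x)
        rwa [cardB] at this
      exact key_pos (n:ℝ) (m:ℝ) t _ _ _ _ hN hM ht0 ht1 hle hCA hCB
  refine ⟨main, ?_, ?_⟩
  · rintro t ⟨ht0, ht1⟩ hle
    refine (main t ⟨ht0, ht1⟩).mpr ?_
    have hKpos : (0:ℝ) < ((n:ℝ)-1)*((m:ℝ)-1) := by nlinarith
    have h2 : t^2 ≤ (1/Real.sqrt (((n:ℝ)-1)*((m:ℝ)-1)))^2 :=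
      pow_le_pow_left₀ ht0.le hle 2
    rw [div_pow, one_pow, Real.sq_sqrt hKpos.le] at h2
    calc ((n:ℝ)-1)*((m:ℝ)-1)*t^2 ≤ ((n:ℝ)-1)*((m:ℝ)-1)*(1/(((n:ℝ)-1)*((m:ℝ)-1))) :=
          mul_le_mul_of_nonneg_left h2 hKpos.le
      _ = 1 := by rw [mul_one_div, div_self hKpos.ne']
  · rintro t ⟨ht0, ht1⟩ hgt hpsd
    have hle := (main t ⟨ht0, ht1⟩).mp hpsd
    have hKpos : (0:ℝ) < ((n:ℝ)-1)*((m:ℝ)-1) := by nlinarith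
    have h2 : (1/Real.sqrt (((n:ℝ)-1)*((m:ℝ)-1)))^2 < t^2 :=
      pow_lt_pow_left₀ hgt (by positivity) two_ne_zero
    rw [div_pow, one_pow, Real.sq_sqrt hKpos.le] at h2
    have h3 := (div_lt_iff₀ hKpos).mp h2
    nlinarith
end

section
/- Let n,m ≥ 2 be integers with n+m ≥ 5. Then K_{n,m} is not Mossay–Tabuchi stable: there exists t ∈ (0,1) such that the matrix Φ^{K_{n,m}}_t is not positive semidefinite (it has a strictly negative eigenvalue). -/
open Finset

lemma sum_ite_aux (s : Finset ℕ) {i : ℕ} (hi : i ∈ s) (a b : ℝ) :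
    ∑ j ∈ s, (if i = j then a else b) = b * s.card + (a - b) := by
  have h : ∀ j ∈ s, (if i = j then a else b) = b + (if i = j then a - b else 0) := by
    intro j _; by_cases h : i = j <;> simp [h]
  rw [Finset.sum_congr rfl h, Finset.sum_add_distrib, Finset.sum_const, Finset.sum_ite_eq,
    if_pos hi, nsmul_eq_mul, mul_comm]

/-- for n,m ≥ 2 with n+m ≥ 5, K_{n,m} is not Mossay–Tabuchi stable:
some Φ^{K_{n,m}}_t with t ∈ (0,1) is not positive semidefinite. -/
theorem PhiK_not_MT_stable (n m : ℕ) (hn : 2 ≤ n) (hm : 2 ≤ m) (hnm : 5 ≤ n + m) :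
    ∃ t ∈ Set.Ioo (0 : ℝ) 1, ¬ (PhiK n m t).PosSemidef := by
  refine ⟨9/10, ⟨by norm_num, by norm_num⟩, fun hpsd => ?_⟩
  set t : ℝ := 9/10 with ht
  set N : ℝ := (n : ℝ) with hN
  set Mr : ℝ := (m : ℝ) with hMr
  set A : ℝ := N * (1 + (N - 1) * t ^ 2) with hA
  set C : ℝ := N * Mr * t with hC
  set P : ℝ := C * (1 + (N - 1) * t ^ 2) - Mr * t * A with hP
  set R : ℝ := N * t * C - A * (1 + (Mr - 1) * t ^ 2) with hR
  set v : Fin (n + m) → ℝ := fun i => if (i : ℕ) < n then C else -A with hv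
  have hg : ∀ i j : Fin (n + m), PhiK n m t i j
      = (if (i : ℕ) = (j : ℕ) then 1 else if ((i : ℕ) < n ↔ (j : ℕ) < n) then t ^ 2 else t) := by
    intro i j
    by_cases h : i = j
    · simp [PhiK, h]
    · have h' : (i : ℕ) ≠ (j : ℕ) := fun hh => h (Fin.ext hh)
      simp [PhiK, h, h']
  have hcard1 : ((Finset.Ico 0 n).card : ℝ) = N := by
    rw [Nat.card_Ico]; simp [hN]
  have hcard2 : ((Finset.Ico n (n + m)).card : ℝ) = Mr := by
    rw [Nat.card_Ico]; simp [hMr]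
  have hinner : ∀ i : Fin (n + m), (PhiK n m t).mulVec v i
      = if (i : ℕ) < n then P else R := by
    intro i
    have h1 : (PhiK n m t).mulVec v i
        = ∑ j : Fin (n + m), (fun b : ℕ =>
            (if (i : ℕ) = b then 1 else if ((i : ℕ) < n ↔ b < n) then t ^ 2 else t)
              * (if b < n then C else -A)) (j : ℕ) := by
      simp only [Matrix.mulVec, dotProduct]
      exact Finset.sum_congr rfl fun j _ => by beta_reduce; rw [hg]
    rw [h1]
    rw [Fin.sum_univ_eq_sum_range (fun b : ℕ =>
            (if (i : ℕ) = b then 1 else if ((i : ℕ) < n ↔ b < n) then t ^ 2 else t)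
              * (if b < n then C else -A)) (n + m)]
    rw [Finset.range_eq_Ico,
      ← Finset.sum_Ico_consecutive _ (Nat.zero_le n) (Nat.le_add_right n m)]
    by_cases hi : (i : ℕ) < n
    · rw [if_pos hi]
      have e1 : ∑ b ∈ Finset.Ico 0 n,
          ((if (i : ℕ) = b then 1 else if ((i : ℕ) < n ↔ b < n) then t ^ 2 else t)
            * (if b < n then C else -A))
          = ∑ b ∈ Finset.Ico 0 n, (if (i : ℕ) = b then C else t ^ 2 * C) := by
        refine Finset.sum_congr rfl fun b hb => ?_
        have hb' : b < n := (Finset.mem_Ico.mp hb).2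
        by_cases h : (i : ℕ) = b <;> simp [h, hi, hb']
      have e2 : ∑ b ∈ Finset.Ico n (n + m),
          ((if (i : ℕ) = b then 1 else if ((i : ℕ) < n ↔ b < n) then t ^ 2 else t)
            * (if b < n then C else -A))
          = ∑ b ∈ Finset.Ico n (n + m), t * (-A) := by
        refine Finset.sum_congr rfl fun b hb => ?_
        have hb' : ¬ b < n := not_lt.mpr (Finset.mem_Ico.mp hb).1
        have hne : (i : ℕ) ≠ b := by omega
        simp [hne, hi, hb']
      rw [e1, e2, sum_ite_aux _ (by simpa using hi), Finset.sum_const, nsmul_eq_mul]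
      rw [hcard1, hcard2]
      simp only [hP, hA, hC]
      ring
    · rw [if_neg hi]
      have e1 : ∑ b ∈ Finset.Ico 0 n,
          ((if (i : ℕ) = b then 1 else if ((i : ℕ) < n ↔ b < n) then t ^ 2 else t)
            * (if b < n then C else -A))
          = ∑ b ∈ Finset.Ico 0 n, t * C := by
        refine Finset.sum_congr rfl fun b hb => ?_
        have hb' : b < n := (Finset.mem_Ico.mp hb).2
        have hne : (i : ℕ) ≠ b := by omega
        simp [hne, hi, hb']
      have e2 : ∑ b ∈ Finset.Ico n (n + m),
          ((if (i : ℕ) = b then 1 else if ((i : ℕ) < n ↔ b < n) then t ^ 2 else t)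
            * (if b < n then C else -A))
          = ∑ b ∈ Finset.Ico n (n + m), (if (i : ℕ) = b then -A else t ^ 2 * (-A)) := by
        refine Finset.sum_congr rfl fun b hb => ?_
        have hb' : ¬ b < n := not_lt.mpr (Finset.mem_Ico.mp hb).1
        by_cases h : (i : ℕ) = b <;> simp [h, hi, hb']
      have hi' : (i : ℕ) ∈ Finset.Ico n (n + m) := by
        simp only [Finset.mem_Ico]
        exact ⟨not_lt.mp hi, i.isLt⟩
      rw [e1, e2, sum_ite_aux _ hi', Finset.sum_const, nsmul_eq_mul]
      rw [hcard1, hcard2]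
      simp only [hR, hA, hC]
      ring
  have hQ : dotProduct v ((PhiK n m t).mulVec v) = N * (C * P) + Mr * (-A * R) := by
    simp only [dotProduct]
    have e : ∀ i : Fin (n + m), v i * (PhiK n m t).mulVec v i
        = (fun b : ℕ => (if b < n then C else -A) * (if b < n then P else R)) (i : ℕ) := by
      intro i; rw [hinner i]
    rw [Finset.sum_congr rfl fun i _ => e i]
    rw [Fin.sum_univ_eq_sum_range (fun b : ℕ =>
        (if b < n then C else -A) * (if b < n then P else R)) (n + m)]
    rw [Finset.range_eq_Ico,
      ← Finset.sum_Ico_consecutive _ (Nat.zero_le n) (Nat.le_add_right n m)]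
    have e1 : ∑ b ∈ Finset.Ico 0 n, ((if b < n then C else -A) * (if b < n then P else R))
        = ∑ b ∈ Finset.Ico 0 n, C * P := by
      refine Finset.sum_congr rfl fun b hb => ?_
      have hb' : b < n := (Finset.mem_Ico.mp hb).2
      simp [hb']
    have e2 : ∑ b ∈ Finset.Ico n (n + m), ((if b < n then C else -A) * (if b < n then P else R))
        = ∑ b ∈ Finset.Ico n (n + m), -A * R := by
      refine Finset.sum_congr rfl fun b hb => ?_
      have hb' : ¬ b < n := not_lt.mpr (Finset.mem_Ico.mp hb).1
      simp [hb']
    rw [e1, e2, Finset.sum_const, Finset.sum_const, nsmul_eq_mul, nsmul_eq_mul, hcard1, hcard2]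
  have hN2 : (2 : ℝ) ≤ N := by rw [hN]; exact_mod_cast hn
  have hM2 : (2 : ℝ) ≤ Mr := by rw [hMr]; exact_mod_cast hm
  have h3 : 3 ≤ n ∨ 3 ≤ m := by omega
  have hprod : (2 : ℝ) ≤ (N - 1) * (Mr - 1) := by
    rcases h3 with h | h
    · have : (3 : ℝ) ≤ N := by rw [hN]; exact_mod_cast h
      nlinarith
    · have : (3 : ℝ) ≤ Mr := by rw [hMr]; exact_mod_cast h
      nlinarith
  have ht2 : t ^ 2 = 81 / 100 := by rw [ht]; norm_num
  have hApos : 0 < A := by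
    rw [hA, ht2]; nlinarith
  have hfac : N * (C * P) + Mr * (-A * R)
      = A * (N * Mr) * ((1 - t ^ 2) * (1 - (N - 1) * (Mr - 1) * t ^ 2)) := by
    simp only [hP, hR, hA, hC]; ring
  have hneg : N * (C * P) + Mr * (-A * R) < 0 := by
    rw [hfac]
    have hpos : 0 < A * (N * Mr) * (1 - t ^ 2) := by
      apply mul_pos (mul_pos hApos (by nlinarith)) (by rw [ht2]; norm_num)
    have hlt : 1 - (N - 1) * (Mr - 1) * t ^ 2 < 0 := by rw [ht2]; nlinarith
    calc A * (N * Mr) * ((1 - t ^ 2) * (1 - (N - 1) * (Mr - 1) * t ^ 2))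
        = (A * (N * Mr) * (1 - t ^ 2)) * (1 - (N - 1) * (Mr - 1) * t ^ 2) := by ring
      _ < 0 := mul_neg_of_pos_of_neg hpos hlt
  have h0 := hpsd.dotProduct_mulVec_nonneg v
  have hsv : star v = v := by funext i; simp
  rw [hsv, hQ] at h0
  linarith
end

section
/- Let ε > 0 and τ be real numbers with −1 < τ < 0 and τ·ε < −1. Then there exists a real number u > 1 such that u^ε·(−1 + τ + u + τu) = 1 + τ − u + τu; equivalently, u^ε + 1 + τ·(u+1)·(u^ε − 1)/(u − 1) = 0. -/
/-- for ε > 0 and −1 < τ < 0 with τε < −1, there is a nontrivial root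
u > 1 of u^ε(−1+τ+u+τu) = 1+τ−u+τu, equivalently of
u^ε + 1 + τ(u+1)(u^ε−1)/(u−1) = 0. -/
theorem exists_nontrivial_root (ε τ : ℝ) (hε : 0 < ε) (hτ₁ : -1 < τ) (hτ₂ : τ < 0)
    (hτε : τ * ε < -1) :
    ∃ u : ℝ, 1 < u ∧
      u ^ ε * (-1 + τ + u + τ * u) = 1 + τ - u + τ * u ∧
      u ^ ε + 1 + τ * (u + 1) * (u ^ ε - 1) / (u - 1) = 0 := by
  set g : ℝ → ℝ := fun u => u ^ ε * (-1 + τ + u + τ * u) - (1 + τ - u + τ * u) with hgdef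
  have h1τ : 0 < 1 + τ := by linarith
  have hg1 : g 1 = 0 := by simp [hgdef, Real.one_rpow]
  -- derivative of g at 1 is 2(τε+1) < 0
  have hd : HasDerivAt g (2 * (τ * ε + 1)) 1 := by
    have h1 : HasDerivAt (fun u : ℝ => u ^ ε) (ε * (1:ℝ) ^ (ε - 1)) 1 :=
      Real.hasDerivAt_rpow_const (Or.inl one_ne_zero)
    have h2 : HasDerivAt (fun u : ℝ => -1 + τ + u + τ * u) (0 + 1 + τ * 1) 1 :=
      ((hasDerivAt_const (1:ℝ) (-1 + τ)).add (hasDerivAt_id 1)).add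
        ((hasDerivAt_id 1).const_mul τ)
    have h3 : HasDerivAt (fun u : ℝ => 1 + τ - u + τ * u) (0 - 1 + τ * 1) 1 :=
      (((hasDerivAt_const (1:ℝ) (1 + τ)).sub (hasDerivAt_id 1))).add
        ((hasDerivAt_id 1).const_mul τ)
    have := (h1.mul h2).sub h3
    refine HasDerivAt.congr_deriv this ?_
    simp [Real.one_rpow]
    ring
  -- find u₀ > 1 with g u₀ < 0
  have hslope : Filter.Tendsto (slope g 1) (nhdsWithin 1 {(1:ℝ)}ᶜ) (nhds (2 * (τ * ε + 1))) :=
    hasDerivAt_iff_tendsto_slope.1 hd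
  have hslope' : Filter.Tendsto (slope g 1) (nhdsWithin 1 (Set.Ioi 1)) (nhds (2 * (τ * ε + 1))) :=
    hslope.mono_left (nhdsWithin_mono 1 (fun x hx => ne_of_gt hx))
  have hev : ∀ᶠ u in nhdsWithin 1 (Set.Ioi 1), slope g 1 u < 0 :=
    hslope'.eventually_lt_const (by linarith)
  obtain ⟨u₀, hu₀s, hu₀⟩ := (hev.and self_mem_nhdsWithin).exists
  have hu₀1 : (1:ℝ) < u₀ := hu₀
  have hgu₀ : g u₀ < 0 := by
    have hs : (g u₀ - g 1) / (u₀ - 1) < 0 := by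
      rwa [slope_def_field] at hu₀s
    rw [hg1, sub_zero] at hs
    have := (div_neg_iff.1 hs)
    rcases this with ⟨h, _⟩ | ⟨h, h'⟩
    · linarith
    · linarith
  -- find b > u₀ with g b > 0
  set b : ℝ := max (u₀ + 1) ((1 - τ) / (1 + τ) + 1) with hbdef
  have hb1 : u₀ + 1 ≤ b := le_max_left _ _
  have hb2 : (1 - τ) / (1 + τ) + 1 ≤ b := le_max_right _ _
  have hbgt1 : (1:ℝ) < b := by linarith
  have hbpos : 0 < (1 + τ) * b - (1 - τ) := by
    have : (1 - τ) / (1 + τ) * (1 + τ) = 1 - τ := div_mul_cancel₀ _ (ne_of_gt h1τ)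
    nlinarith [mul_le_mul_of_nonneg_left hb2 h1τ.le]
  have hbrpow : (1:ℝ) ≤ b ^ ε := by
    have := Real.rpow_le_rpow (by norm_num : (0:ℝ) ≤ 1) hbgt1.le hε.le
    simpa [Real.one_rpow] using this
  have hgb : 0 < g b := by
    have key : (1:ℝ) * ((1 + τ) * b - (1 - τ)) ≤ b ^ ε * ((1 + τ) * b - (1 - τ)) :=
      mul_le_mul_of_nonneg_right hbrpow hbpos.le
    have heq : g b = b ^ ε * ((1 + τ) * b - (1 - τ)) + ((1 - τ) * b - (1 + τ)) := by
      simp [hgdef]; ring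
    rw [heq]
    nlinarith
  -- IVT
  have hcont : ContinuousOn g (Set.Icc u₀ b) := by
    have hrc : Continuous fun u : ℝ => u ^ ε := by
      apply continuous_iff_continuousAt.2
      intro x
      exact Real.continuousAt_rpow_const x ε (Or.inr hε.le)
    exact ((hrc.mul (by continuity)).sub (by continuity)).continuousOn
  have hle : u₀ ≤ b := by linarith
  have h0mem : (0:ℝ) ∈ Set.Icc (g u₀) (g b) := ⟨hgu₀.le, hgb.le⟩
  obtain ⟨u, humem, hgu⟩ := intermediate_value_Icc hle hcont h0mem
  refine ⟨u, by linarith [humem.1], ?_, ?_⟩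
  · have : u ^ ε * (-1 + τ + u + τ * u) - (1 + τ - u + τ * u) = 0 := hgu
    linarith
  · have hu1 : (1:ℝ) < u := by linarith [humem.1]
    have hune : u - 1 ≠ 0 := sub_ne_zero_of_ne (ne_of_gt hu1)
    have : u ^ ε * (-1 + τ + u + τ * u) - (1 + τ - u + τ * u) = 0 := hgu
    field_simp
    linear_combination this
end

section
/- Let λ_a, λ_b, ε be real numbers with λ_a > 0, |λ_b| < λ_a, ε > 0, and ε·λ_b/λ_a < −1. Then there exist real numbers x and y with y ≠ 0 such that x + y > 0, x − y > 0, λ_a·x + λ_b·y > 0, λ_a·x − λ_b·y > 0, and (x+y)^{−1/ε} = λ_a·x + λ_b·y and (x−y)^{−1/ε} = λ_a·x − λ_b·y. -/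
open Real Filter Set Topology

set_option maxHeartbeats 1600000 in
/-- the reduced 2×2 Mossay–Tabuchi system admits a solution with y ≠ 0
when ε·λ_b/λ_a < −1. -/
theorem exists_asymmetric_solution (lamA lamB ε : ℝ)
    (hA : 0 < lamA) (hB : |lamB| < lamA) (hε : 0 < ε)
    (hτε : ε * lamB / lamA < -1) :
    ∃ x y : ℝ, y ≠ 0 ∧ 0 < x + y ∧ 0 < x - y ∧
      0 < lamA * x + lamB * y ∧ 0 < lamA * x - lamB * y ∧
      (x + y) ^ (-1 / ε) = lamA * x + lamB * y ∧
      (x - y) ^ (-1 / ε) = lamA * x - lamB * y := by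
  have hεne : ε ≠ 0 := ne_of_gt hε
  obtain ⟨α, hαdef⟩ : ∃ α : ℝ, α = 1 / ε := ⟨_, rfl⟩
  have hα : 0 < α := by rw [hαdef]; positivity
  obtain ⟨r, hrdef⟩ : ∃ r : ℝ, r = lamB / lamA := ⟨_, rfl⟩
  have hlamB : lamB = r * lamA := by rw [hrdef]; field_simp
  have hr1 : -1 < r := by
    have h1 : -lamA < lamB := (abs_lt.mp hB).1
    rw [hrdef, lt_div_iff₀ hA]
    linarith
  have hr2 : r < -α := by
    have h1 : ε * r < -1 := by
      rw [hrdef, ← mul_div_assoc]; exact hτε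
    rw [hαdef, ← neg_div, lt_div_iff₀ hε]
    nlinarith
  have hr0 : r < 0 := lt_trans hr2 (by linarith)
  -- the bifurcation function
  obtain ⟨h, hdef⟩ :
      ∃ h : ℝ → ℝ, h = fun c => (1 - c ^ (-α)) * (1 + c) - r * (1 - c) * (1 + c ^ (-α)) :=
    ⟨_, rfl⟩
  -- explicit point c₀ near zero with h c₀ < 0
  obtain ⟨t, htdef⟩ : ∃ t : ℝ, t = (1 + r) / 4 := ⟨_, rfl⟩
  have h1r : (0:ℝ) < 1 + r := by linarith
  have ht : 0 < t := by rw [htdef]; positivity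
  have ht1 : t < 1 := by rw [htdef, div_lt_one (by norm_num)]; linarith
  obtain ⟨c₀, hc₀def⟩ : ∃ c₀ : ℝ, c₀ = t ^ (1 / α) := ⟨_, rfl⟩
  have hc₀pos : 0 < c₀ := hc₀def ▸ rpow_pos_of_pos ht _
  have hc₀1 : c₀ < 1 := hc₀def ▸ Real.rpow_lt_one ht.le ht1 (by positivity)
  have hc₀a : c₀ ^ (-α) = t⁻¹ := by
    rw [hc₀def, ← Real.rpow_mul ht.le,
      show (1/α) * (-α) = -1 by field_simp]
    exact Real.rpow_neg_one t
  have hM4 : t⁻¹ * (1 + r) = 4 := by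
    rw [htdef]; field_simp
  have hMpos : 0 < t⁻¹ := by positivity
  have hhc₀ : h c₀ < 0 := by
    simp only [hdef, hc₀a]
    nlinarith [mul_pos (mul_pos hMpos hc₀pos) (show (0:ℝ) < 1 - r by linarith),
      mul_neg_of_neg_of_pos hr0 hc₀pos]
  -- a point c₁ near 1 with h c₁ > 0, via slope argument
  have hder : HasDerivAt (fun c : ℝ => c ^ (-α)) (-α) 1 := by
    have hd := Real.hasDerivAt_rpow_const (x := (1:ℝ)) (p := -α) (Or.inl one_ne_zero)
    simpa using hd
  have hslope : Tendsto (fun x : ℝ => (x ^ (-α) - 1) / (x - 1)) (𝓝[≠] (1:ℝ)) (𝓝 (-α)) := by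
    have hs := hasDerivAt_iff_tendsto_slope.mp hder
    simpa [slope_fun_def, Real.one_rpow, div_eq_mul_inv, mul_comm] using hs
  have hfac1 : Tendsto (fun x : ℝ => (x ^ (-α) - 1) / (1 - x)) (𝓝[<] (1:ℝ)) (𝓝 α) := by
    have h1 := (hslope.mono_left (nhdsWithin_mono _ fun x hx => ne_of_lt hx)).neg
    have heq : (fun x : ℝ => (x ^ (-α) - 1) / (1 - x))
        = fun x : ℝ => -((x ^ (-α) - 1) / (x - 1)) := by
      funext x
      rw [show (1 - x) = -(x - 1) by ring, div_neg]
    rw [heq]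
    simpa using (show Tendsto _ (𝓝[<] (1:ℝ)) _ from h1)
  have hfac2 : Tendsto (fun x : ℝ => (1 + x) / (1 + x ^ (-α))) (𝓝[<] (1:ℝ)) (𝓝 1) := by
    have hc : ContinuousAt (fun x : ℝ => (1 + x) / (1 + x ^ (-α))) 1 := by
      apply ContinuousAt.div
      · exact continuousAt_const.add continuousAt_id
      · exact continuousAt_const.add (Real.continuousAt_rpow_const 1 _ (Or.inl one_ne_zero))
      · norm_num [Real.one_rpow]
    have h2 := (hc.continuousWithinAt (s := Iio (1:ℝ))).tendsto
    have hval : (1 + (1:ℝ)) / (1 + (1:ℝ) ^ (-α)) = 1 := by norm_num [Real.one_rpow]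
    rw [hval] at h2
    exact h2
  have hg : Tendsto (fun x : ℝ => ((x ^ (-α) - 1) * (1 + x)) / ((1 - x) * (1 + x ^ (-α))))
      (𝓝[<] (1:ℝ)) (𝓝 α) := by
    have h3 := hfac1.mul hfac2
    simp only [div_mul_div_comm] at h3
    simpa using h3
  have hev : ∀ᶠ x in 𝓝[<] (1:ℝ),
      ((x ^ (-α) - 1) * (1 + x)) / ((1 - x) * (1 + x ^ (-α))) < -r :=
    (tendsto_order.mp hg).2 _ (by linarith)
  have hev2 : ∀ᶠ x in 𝓝[<] (1:ℝ), x ∈ Ioo c₀ 1 :=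
    Ioo_mem_nhdsLT_of_mem ⟨hc₀1, le_rfl⟩
  obtain ⟨c₁, hgc₁, hc₁mem⟩ := (hev.and hev2).exists
  have hc₁pos : 0 < c₁ := lt_trans hc₀pos hc₁mem.1
  have hc₁1 : c₁ < 1 := hc₁mem.2
  have hc₁apos : 0 < c₁ ^ (-α) := rpow_pos_of_pos hc₁pos _
  have hd1 : 0 < (1 - c₁) * (1 + c₁ ^ (-α)) :=
    mul_pos (by linarith) (by linarith)
  have hnum : (c₁ ^ (-α) - 1) * (1 + c₁) < -r * ((1 - c₁) * (1 + c₁ ^ (-α))) :=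
    (div_lt_iff₀ hd1).mp hgc₁
  have hhc₁ : 0 < h c₁ := by
    simp only [hdef]
    linarith [hnum]
  -- IVT
  have hcont : ContinuousOn h (Icc c₀ c₁) := by
    rw [hdef]
    intro z hz
    have hz0 : z ≠ 0 := ne_of_gt (lt_of_lt_of_le hc₀pos hz.1)
    have hzrp : ContinuousAt (fun w : ℝ => w ^ (-α)) z :=
      Real.continuousAt_rpow_const z _ (Or.inl hz0)
    exact (((continuousAt_const.sub hzrp).mul (continuousAt_const.add continuousAt_id)).sub
      (((continuousAt_const.mul (continuousAt_const.sub continuousAt_id)).mul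
        (continuousAt_const.add hzrp)))).continuousWithinAt
  have hivt := intermediate_value_Icc (le_of_lt hc₁mem.1) hcont
  obtain ⟨c, hcmem, hceq⟩ := hivt ⟨hhc₀.le, hhc₁.le⟩
  have hcpos : 0 < c := lt_of_lt_of_le hc₀pos hcmem.1
  have hclt : c < 1 := lt_of_le_of_lt hcmem.2 hc₁1
  have hcapos : 0 < c ^ (-α) := rpow_pos_of_pos hcpos _
  have h1c : (0:ℝ) < 1 + c := by linarith
  have h1ca : (0:ℝ) < 1 + c ^ (-α) := by linarith
  -- construct the solution
  obtain ⟨K, hKdef⟩ : ∃ K : ℝ, K = lamA * (1 + c) / (1 + c ^ (-α)) := ⟨_, rfl⟩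
  have hKpos : 0 < K := by rw [hKdef]; positivity
  obtain ⟨u, hudef⟩ : ∃ u : ℝ, u = K ^ (-1 / (α + 1)) := ⟨_, rfl⟩
  have hu : 0 < u := hudef ▸ rpow_pos_of_pos hKpos _
  have hukey : u ^ (-α) = K * u := by
    rw [hudef, ← Real.rpow_mul hKpos.le,
      show (-1 / (α + 1)) * (-α) = 1 + -1 / (α + 1) by field_simp; ring,
      Real.rpow_add hKpos, Real.rpow_one]
  have hE1 : u ^ (-α) * (1 + c ^ (-α)) = lamA * u * (1 + c) := by
    rw [hukey, hKdef]
    field_simp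
  have hkey : (1 - c ^ (-α)) * (1 + c) = r * (1 - c) * (1 + c ^ (-α)) := by
    have h4 := hceq
    simp only [hdef] at h4
    linarith
  have hE2 : u ^ (-α) * (1 - c ^ (-α)) = lamB * u * (1 - c) := by
    have step : u ^ (-α) * (1 - c ^ (-α)) * (1 + c) = lamB * u * (1 - c) * (1 + c) := by
      calc u ^ (-α) * (1 - c ^ (-α)) * (1 + c)
          = u ^ (-α) * ((1 - c ^ (-α)) * (1 + c)) := by ring
        _ = u ^ (-α) * (r * (1 - c) * (1 + c ^ (-α))) := by rw [hkey]
        _ = r * (1 - c) * (u ^ (-α) * (1 + c ^ (-α))) := by ring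
        _ = r * (1 - c) * (lamA * u * (1 + c)) := by rw [hE1]
        _ = lamB * u * (1 - c) * (1 + c) := by rw [hlamB]; ring
    exact mul_right_cancel₀ (ne_of_gt h1c) step
  have hupos : 0 < u ^ (-α) := rpow_pos_of_pos hu _
  have hAx : lamA * ((u + c * u) / 2) + lamB * ((u - c * u) / 2) = u ^ (-α) := by
    linear_combination (-hE1 - hE2) / 2
  have hBx : lamA * ((u + c * u) / 2) - lamB * ((u - c * u) / 2) = (c * u) ^ (-α) := by
    have hmul : (c * u) ^ (-α) = c ^ (-α) * u ^ (-α) := Real.mul_rpow hcpos.le hu.le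
    rw [hmul]
    linear_combination (hE2 - hE1) / 2
  have hxy : (u + c * u) / 2 + (u - c * u) / 2 = u := by ring
  have hxy' : (u + c * u) / 2 - (u - c * u) / 2 = c * u := by ring
  have hexp : (-1 : ℝ) / ε = -α := by rw [hαdef]; ring
  refine ⟨(u + c * u) / 2, (u - c * u) / 2, ?_, ?_, ?_, ?_, ?_, ?_, ?_⟩
  · have hy : 0 < (u - c * u) / 2 := by
      linarith [mul_pos hu (show (0:ℝ) < 1 - c by linarith)]
    exact ne_of_gt hy
  · rw [hxy]; exact hu
  · rw [hxy']; positivity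
  · rw [hAx]; exact hupos
  · rw [hBx]; exact rpow_pos_of_pos (by positivity) _
  · rw [hxy, hAx, hexp]
  · rw [hxy', hBx, hexp]
end

section
/- Let t ∈ (1/2, 1) and let Φ be the 6×6 matrix Φ^{K_{3,3}}_t (diagonal entries 1, entries t² between distinct indices within {1,2,3} and within {4,5,6}, and entries t between an index in {1,2,3} and an index in {4,5,6}), and take all country sizes L_i = 1. If ε > (1+2t)(1+t)/((2t−1)(1−t)), then the equilibrium system v_i = ∑_{j=1}^{6} φ_ij·v_j^{−ε} with all v_i > 0 has at least two distinct solutions, i.e., perverse equilibria exist. -/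
open Real Set Filter Topology

private lemma rpow_fix {x C ε : ℝ} (hx : 0 < x) (h : x ^ (1 + ε) = C) :
    x = C * x ^ (-ε) := by
  have h1 : x ^ (1 + ε) = x * x ^ ε := by
    rw [Real.rpow_add hx, Real.rpow_one]
  have h2 : x ^ ε * x ^ (-ε) = 1 := by
    rw [← Real.rpow_add hx, add_neg_cancel, Real.rpow_zero]
  calc x = x * (x ^ ε * x ^ (-ε)) := by rw [h2, mul_one]
    _ = (x ^ (1 + ε)) * x ^ (-ε) := by rw [h1]; ring
    _ = C * x ^ (-ε) := by rw [h]

private lemma exists_root {A B ε : ℝ} (hA : 0 < A) (hB : 0 < B) (hAB : A < B)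
    (hε : (A + B) / (B - A) < ε) :
    ∃ r : ℝ, 1 < r ∧ A * (r ^ (1 + ε) - 1) + B * (r - r ^ ε) = 0 := by
  set g : ℝ → ℝ := fun r => A * (r ^ (1 + ε) - 1) + B * (r - r ^ ε) with hg
  have hBA : 0 < B - A := by linarith
  have hd : A * (1 + ε) + B * (1 - ε) < 0 := by
    have := (div_lt_iff₀ hBA).mp hε
    nlinarith
  have hg1 : g 1 = 0 := by simp [hg]
  have hder : HasDerivAt g (A * (1 + ε) + B * (1 - ε)) 1 := by
    have h1 : HasDerivAt (fun r : ℝ => r ^ (1 + ε)) ((1 + ε) * (1 : ℝ) ^ ((1 + ε) - 1)) 1 :=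
      Real.hasDerivAt_rpow_const (Or.inl one_ne_zero)
    have h2 : HasDerivAt (fun r : ℝ => r ^ ε) (ε * (1 : ℝ) ^ (ε - 1)) 1 :=
      Real.hasDerivAt_rpow_const (Or.inl one_ne_zero)
    rw [Real.one_rpow] at h1 h2
    have h3 := ((h1.sub_const 1).const_mul A).add (((hasDerivAt_id 1).sub h2).const_mul B)
    have h4 : HasDerivAt g (A * ((1 + ε) * 1) + B * (1 - ε * 1)) 1 := h3
    convert h4 using 1; ring
  obtain ⟨r₀, hs, hr₀⟩ : ∃ r₀, slope g 1 r₀ < 0 ∧ r₀ ∈ Ioi (1 : ℝ) := by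
    have h := hasDerivAt_iff_tendsto_slope.mp hder
    have h2 : ∀ᶠ x in 𝓝[≠] (1 : ℝ), slope g 1 x < 0 := h.eventually_lt_const hd
    have hmono : 𝓝[>] (1 : ℝ) ≤ 𝓝[≠] (1 : ℝ) :=
      nhdsWithin_mono _ (fun x hx => ne_of_gt hx)
    exact ((h2.filter_mono hmono).and self_mem_nhdsWithin).exists
  have hr₀1 : (1 : ℝ) < r₀ := hr₀
  have hgr₀ : g r₀ < 0 := by
    rw [slope_def_field, hg1, sub_zero] at hs
    rcases div_neg_iff.mp hs with ⟨h1, h2⟩ | ⟨h1, h2⟩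
    · linarith
    · exact h1
  set R : ℝ := r₀ + B / A + A / B with hRdef
  have hdiv1 : 0 < B / A := div_pos hB hA
  have hdiv2 : 0 < A / B := div_pos hA hB
  have hr₀R : r₀ ≤ R := by rw [hRdef]; linarith
  have hRpos : 0 < R := by linarith
  have hR2 : B < A * R := by
    rw [hRdef, mul_add, mul_add, mul_div_cancel₀ _ hA.ne']
    have h1 : 0 < A * r₀ := mul_pos hA (by linarith)
    have h2 : 0 < A * (A / B) := mul_pos hA hdiv2
    linarith
  have hR3 : A < B * R := by
    rw [hRdef, mul_add, mul_add, mul_div_cancel₀ _ hB.ne']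
    have h1 : 0 < B * r₀ := mul_pos hB (by linarith)
    have h2 : 0 < B * (B / A) := mul_pos hB hdiv1
    linarith
  have hgR : 0 < g R := by
    have hRe : R ^ (1 + ε) = R * R ^ ε := by
      rw [Real.rpow_add hRpos, Real.rpow_one]
    have hRep : 0 < R ^ ε := Real.rpow_pos_of_pos hRpos ε
    have hval : g R = R ^ ε * (A * R - B) + (B * R - A) := by
      simp only [hg]
      rw [hRe]; ring
    rw [hval]
    have := mul_pos hRep (sub_pos.mpr hR2)
    linarith
  have hcont : ContinuousOn g (Icc r₀ R) := by
    intro x hx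
    have hxpos : x ≠ 0 := by
      have : 1 < x := lt_of_lt_of_le hr₀1 hx.1
      linarith
    have c1 : ContinuousAt (fun r : ℝ => r ^ (1 + ε)) x :=
      Real.continuousAt_rpow_const x _ (Or.inl hxpos)
    have c2 : ContinuousAt (fun r : ℝ => r ^ ε) x :=
      Real.continuousAt_rpow_const x _ (Or.inl hxpos)
    have c3 : ContinuousAt (fun r : ℝ => r) x := continuousAt_id
    have hcg : ContinuousAt g x := by
      show ContinuousAt (fun r : ℝ => A * (r ^ (1 + ε) - 1) + B * (r - r ^ ε)) x
      exact ((c1.sub continuousAt_const).const_mul A).add ((c3.sub c2).const_mul B)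
    exact hcg.continuousWithinAt
  have hsub := intermediate_value_Icc hr₀R hcont
  have h0 : (0 : ℝ) ∈ Icc (g r₀) (g R) := ⟨le_of_lt hgr₀, le_of_lt hgR⟩
  obtain ⟨r, hrmem, hgr⟩ := hsub h0
  exact ⟨r, lt_of_lt_of_le hr₀1 hrmem.1, hgr⟩

private lemma sum_six (f : Fin (3 + 3) → ℝ) :
    ∑ j, f j = f ⟨0, by norm_num⟩ + f ⟨1, by norm_num⟩ + f ⟨2, by norm_num⟩
      + f ⟨3, by norm_num⟩ + f ⟨4, by norm_num⟩ + f ⟨5, by norm_num⟩ :=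
  Fin.sum_univ_six f

/-- for the 6×6 matrix Φ^{K_{3,3}}_t with t ∈ (1/2,1), all country sizes 1,
and ε > (1+2t)(1+t)/((2t−1)(1−t)), the equilibrium system v_i = ∑_j φ_ij·v_j^{−ε} with
v_i > 0 has at least two distinct solutions: perverse equilibria exist. -/
theorem K33_perverse_equilibria (t : ℝ) (ht : t ∈ Set.Ioo (1 / 2 : ℝ) 1)
    (ε : ℝ) (hε : (1 + 2 * t) * (1 + t) / ((2 * t - 1) * (1 - t)) < ε) :
    ∃ v v' : Fin (3 + 3) → ℝ,
      (∀ i, 0 < v i) ∧ (∀ i, 0 < v' i) ∧ v ≠ v' ∧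
      (∀ i, v i = ∑ j, PhiK 3 3 t i j * (v j) ^ (-ε)) ∧
      (∀ i, v' i = ∑ j, PhiK 3 3 t i j * (v' j) ^ (-ε)) := by
  obtain ⟨ht1, ht2⟩ := ht
  have htpos : 0 < t := by linarith
  have hA : (0 : ℝ) < 1 + 2 * t ^ 2 := by positivity
  have hB : (0 : ℝ) < 3 * t := by linarith
  have hAB : 1 + 2 * t ^ 2 < 3 * t := by nlinarith
  have hε' : ((1 + 2 * t ^ 2) + 3 * t) / (3 * t - (1 + 2 * t ^ 2)) < ε := by
    have e1 : (1 + 2 * t ^ 2) + 3 * t = (1 + 2 * t) * (1 + t) := by ring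
    have e2 : 3 * t - (1 + 2 * t ^ 2) = (2 * t - 1) * (1 - t) := by ring
    rw [e1, e2]; exact hε
  obtain ⟨r, hr1, hgr⟩ := exists_root hA hB hAB hε'
  have hεpos : 0 < ε :=
    lt_trans (div_pos (by nlinarith) (by linarith)) hε'
  have h1ε : (1 : ℝ) + ε ≠ 0 := by linarith
  have hrpos : 0 < r := lt_trans one_pos hr1
  have hrne : 0 < r ^ (-ε) := Real.rpow_pos_of_pos hrpos _
  set a : ℝ := ((1 + 2 * t ^ 2) + 3 * t * r ^ (-ε)) ^ (1 / (1 + ε)) with hadef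
  have hbase : 0 < (1 + 2 * t ^ 2) + 3 * t * r ^ (-ε) :=
    add_pos hA (mul_pos hB hrne)
  have hapos : 0 < a := Real.rpow_pos_of_pos hbase _
  set b : ℝ := r * a with hbdef
  have hbpos : 0 < b := mul_pos hrpos hapos
  have ha_pow : a ^ (1 + ε) = (1 + 2 * t ^ 2) + 3 * t * r ^ (-ε) := by
    rw [hadef, ← Real.rpow_mul hbase.le, one_div_mul_cancel h1ε, Real.rpow_one]
  have hb_pow : b ^ (1 + ε) = (1 + 2 * t ^ 2) + 3 * t * r ^ ε := by
    rw [hbdef, Real.mul_rpow hrpos.le hapos.le, ha_pow]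
    have h2 : r ^ (1 + ε) * r ^ (-ε) = r := by
      rw [← Real.rpow_add hrpos]
      norm_num
    have h3 : r ^ (1 + ε) * ((1 + 2 * t ^ 2) + 3 * t * r ^ (-ε))
        = (1 + 2 * t ^ 2) * r ^ (1 + ε) + 3 * t * (r ^ (1 + ε) * r ^ (-ε)) := by ring
    rw [h3, h2]
    linarith [hgr]
  have haa : a = (1 + 2 * t ^ 2) * a ^ (-ε) + 3 * t * b ^ (-ε) := by
    have h0 := rpow_fix hapos ha_pow
    have h1 : r ^ (-ε) * a ^ (-ε) = b ^ (-ε) := by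
      rw [hbdef, Real.mul_rpow hrpos.le hapos.le]
    calc a = ((1 + 2 * t ^ 2) + 3 * t * r ^ (-ε)) * a ^ (-ε) := h0
      _ = (1 + 2 * t ^ 2) * a ^ (-ε) + 3 * t * (r ^ (-ε) * a ^ (-ε)) := by ring
      _ = (1 + 2 * t ^ 2) * a ^ (-ε) + 3 * t * b ^ (-ε) := by rw [h1]
  have hbb : b = 3 * t * a ^ (-ε) + (1 + 2 * t ^ 2) * b ^ (-ε) := by
    have h0 := rpow_fix hbpos hb_pow
    have h1 : r ^ ε * b ^ (-ε) = a ^ (-ε) := by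
      rw [hbdef, Real.mul_rpow hrpos.le hapos.le, ← mul_assoc, ← Real.rpow_add hrpos]
      norm_num
    calc b = ((1 + 2 * t ^ 2) + 3 * t * r ^ ε) * b ^ (-ε) := h0
      _ = (1 + 2 * t ^ 2) * b ^ (-ε) + 3 * t * (r ^ ε * b ^ (-ε)) := by ring
      _ = 3 * t * a ^ (-ε) + (1 + 2 * t ^ 2) * b ^ (-ε) := by rw [h1]; ring
  set c : ℝ := ((1 + 2 * t ^ 2) + 3 * t) ^ (1 / (1 + ε)) with hcdef
  have hCpos : (0 : ℝ) < (1 + 2 * t ^ 2) + 3 * t := by linarith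
  have hcpos : 0 < c := Real.rpow_pos_of_pos hCpos _
  have hc_pow : c ^ (1 + ε) = (1 + 2 * t ^ 2) + 3 * t := by
    rw [hcdef, ← Real.rpow_mul hCpos.le, one_div_mul_cancel h1ε, Real.rpow_one]
  have hcc : c = ((1 + 2 * t ^ 2) + 3 * t) * c ^ (-ε) := rpow_fix hcpos hc_pow
  have hab : a < b := by
    rw [hbdef]
    nlinarith
  refine ⟨fun i => if (i : ℕ) < 3 then a else b, fun _ => c, ?_, ?_, ?_, ?_, ?_⟩
  · intro i; dsimp only; split_ifs
    · exact hapos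
    · exact hbpos
  · intro i; exact hcpos
  · intro h
    have h0 := congrFun h ⟨0, by norm_num⟩
    have h3 := congrFun h ⟨3, by norm_num⟩
    simp only at h0 h3
    norm_num at h0 h3
    linarith [h0, h3]
  · intro i
    fin_cases i <;>
      · rw [sum_six]
        norm_num [PhiK, Fin.ext_iff]
        first | linear_combination haa | linear_combination hbb
  · intro i
    fin_cases i <;>
      · rw [sum_six]
        norm_num [PhiK, Fin.ext_iff]
        linear_combination hcc
end
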